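/- arXiv:1703.07008 — 7 statements merged into one kernel-verified Lean document; each statement's English description precedes it below -/
import Mathlib

section
/- Let G be a finite chordal graph with clique number at most t. Then the chromatic number of the adjacent-cliques graph AC(G) satisfies χ(AC(G)) ≤ ((t+1) choose 2). -/
open SimpleGraph

/-- A simple graph is *chordal* if every cycle of length at least 4 has a chord, i.e.
two vertices of the cycle that are adjacent in the graph but not consecutive on the cycle. -/
def SimpleGraph.IsChordal {V : Type*} (G : SimpleGraph V) : Prop :=
  ∀ (v : V) (c : G.Walk v v), c.IsCycle → 4 ≤ c.length →
    ∃ x y, x ∈ c.support ∧ y ∈ c.support ∧ G.Adj x y ∧ ¬ c.toSubgraph.Adj x y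

/-- The exact distance-`p` graph of `G`: same vertex set, with an edge between distinct
vertices `u` and `v` iff their graph distance is exactly `p`. -/
def SimpleGraph.exactDistGraph {V : Type*} (G : SimpleGraph V) (p : ℕ) : SimpleGraph V where
  Adj u v := u ≠ v ∧ G.edist u v = p
  symm := ⟨fun u v h => ⟨h.1.symm, by rw [SimpleGraph.edist_comm]; exact h.2⟩⟩
  loopless := ⟨fun v h => h.1 rfl⟩

/-- The *adjacent-cliques graph* of `G`: one vertex for each nonempty clique of `G`; two
vertices are adjacent iff the corresponding cliques are disjoint and joined by an edge of `G`. -/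
def SimpleGraph.acGraph {V : Type*} (G : SimpleGraph V) :
    SimpleGraph {K : Finset V // K.Nonempty ∧ G.IsClique (K : Set V)} where
  Adj K L := Disjoint K.1 L.1 ∧ ∃ x ∈ K.1, ∃ y ∈ L.1, G.Adj x y
  symm := by
    constructor
    rintro K L ⟨hd, x, hx, y, hy, hxy⟩
    exact ⟨hd.symm, y, hy, x, hx, hxy.symm⟩
  loopless := by
    constructor
    intro K h
    exact K.2.1.ne_empty (disjoint_self.mp h.1)

namespace ACProof

attribute [local instance] Classical.propDecidable

variable {V : Type*}

/-- The restriction of `G` to vertices in a finset `X` (other vertices become isolated). -/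
@[reducible] def Rn (G : SimpleGraph V) (X : Finset V) : SimpleGraph V where
  Adj a b := a ∈ X ∧ b ∈ X ∧ G.Adj a b
  symm := ⟨fun a b h => ⟨h.2.1, h.1, h.2.2.symm⟩⟩
  loopless := ⟨fun a h => G.loopless.irrefl a h.2.2⟩

variable {G : SimpleGraph V}

lemma Rn_mono {X Y : Finset V} (h : X ⊆ Y) : Rn G X ≤ Rn G Y :=
  fun _a _b hab => ⟨h hab.1, h hab.2.1, hab.2.2⟩

lemma Rn_support_mem {X : Finset V} : ∀ {u v : V} (p : (Rn G X).Walk u v),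
    u ∈ X → ∀ w ∈ p.support, w ∈ X := by
  intro u v p
  induction p with
  | nil => intro hu w hw; simp at hw; subst hw; exact hu
  | cons h p ih =>
    intro hu w hw
    rw [SimpleGraph.Walk.support_cons] at hw
    rcases List.mem_cons.mp hw with rfl | hw
    · exact hu
    · exact ih h.2.1 w hw

/-- transfer a walk of `Rn G X` into `G`. -/
noncomputable def toG {X : Finset V} {u v : V} (p : (Rn G X).Walk u v) : G.Walk u v :=
  p.transfer G (by
    intro e he
    induction e with
    | _ a b => exact (p.adj_of_mem_edges he).2.2)

@[simp] lemma toG_support {X : Finset V} {u v : V} (p : (Rn G X).Walk u v) :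
    (toG p).support = p.support := SimpleGraph.Walk.support_transfer _ _

@[simp] lemma toG_edges {X : Finset V} {u v : V} (p : (Rn G X).Walk u v) :
    (toG p).edges = p.edges := SimpleGraph.Walk.edges_transfer _ _

@[simp] lemma toG_length {X : Finset V} {u v : V} (p : (Rn G X).Walk u v) :
    (toG p).length = p.length := SimpleGraph.Walk.length_transfer _ _

lemma toG_isPath {X : Finset V} {u v : V} {p : (Rn G X).Walk u v} (hp : p.IsPath) :
    (toG p).IsPath := by
  constructor
  · constructor
    rw [toG_edges]
    exact hp.isTrail.edges_nodup
  · rw [toG_support]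
    exact hp.support_nodup

/-- A chord between two vertices of a minimum-length walk must be an edge of the walk. -/
lemma minwalk_chord {H : SimpleGraph V} {t : V} :
    ∀ {u : V} (p : H.Walk u t), (∀ q : H.Walk u t, p.length ≤ q.length) →
      ∀ {x y : V}, H.Adj x y → x ∈ p.support → y ∈ p.support → s(x, y) ∈ p.edges := by
  classical
  intro u p
  induction p with
  | nil =>
    intro _ x y hxy hx hy
    simp only [SimpleGraph.Walk.support_nil, List.mem_singleton] at hx hy
    subst hx; subst hy
    exact absurd rfl hxy.ne
  | @cons u v t h p ih =>
    intro hmin x y hxy hx hy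
    have hmin' : ∀ q : H.Walk v t, p.length ≤ q.length := by
      intro q
      have := hmin (SimpleGraph.Walk.cons h q)
      simpa [SimpleGraph.Walk.length_cons] using this
    have aux : ∀ {y : V}, H.Adj u y → y ∈ p.support →
        s(u, y) ∈ (SimpleGraph.Walk.cons h p).edges := by
      intro y huy hyp
      have hdrop : p.length ≤ (p.dropUntil y hyp).length := by
        have := hmin (SimpleGraph.Walk.cons huy (p.dropUntil y hyp))
        simpa [SimpleGraph.Walk.length_cons] using this
      have hspec : (p.takeUntil y hyp).length + (p.dropUntil y hyp).length = p.length := by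
        have h2 := congrArg SimpleGraph.Walk.length (p.take_spec hyp)
        rw [SimpleGraph.Walk.length_append] at h2
        exact h2
      have hdle := p.length_dropUntil_le hyp
      have htake0 : (p.takeUntil y hyp).length = 0 := by omega
      have hvy : v = y := SimpleGraph.Walk.eq_of_length_eq_zero htake0
      subst hvy
      simp [SimpleGraph.Walk.edges_cons]
    rw [SimpleGraph.Walk.support_cons] at hx hy
    rcases List.mem_cons.mp hx with rfl | hxp
    · rcases List.mem_cons.mp hy with rfl | hyp
      · exact absurd rfl hxy.ne
      · exact aux hxy hyp
    · rcases List.mem_cons.mp hy with rfl | hyp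
      · rw [Sym2.eq_swap]
        exact aux hxy.symm hxp
      · exact List.mem_cons_of_mem _ (ih hmin' hxy hxp hyp)

lemma walk_head {H : SimpleGraph V} {u v : V} (q : H.Walk u v) (hne : u ≠ v) :
    ∃ (x : V) (r : H.Walk x v), H.Adj u x ∧ q.support = u :: r.support := by
  cases q with
  | nil => exact absurd rfl hne
  | cons h' r => exact ⟨_, r, h', by simp [SimpleGraph.Walk.support_cons]⟩

lemma walk_length_one_adj {H : SimpleGraph V} {u v : V} (p : H.Walk u v)
    (h : p.length = 1) : H.Adj u v := by
  cases p with
  | nil => simp at h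
  | cons h' r =>
    rw [SimpleGraph.Walk.length_cons] at h
    have : r.length = 0 := by omega
    have := SimpleGraph.Walk.eq_of_length_eq_zero this
    subst this
    exact h'

lemma no_reach_pair {a b : V} (hab : a ≠ b) (hnadj : ¬G.Adj a b) {X : Finset V}
    (hX : ∀ x ∈ X, x = a ∨ x = b) : ¬(Rn G X).Reachable a b := by
  rintro ⟨w⟩
  cases w with
  | nil => exact hab rfl
  | cons h p =>
    rcases hX _ h.2.1 with rfl | rfl
    · exact h.2.2.ne rfl
    · exact hnadj h.2.2

/-- The key separator lemma: a minimal separator in a chordal graph is a clique,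
packaged with the two components and their closure properties. -/
lemma sep_clique (hch : G.IsChordal) {A : Finset V} {a b : V}
    (ha : a ∈ A) (hb : b ∈ A) (hab : a ≠ b) (hnadj : ¬G.Adj a b) :
    ∃ S Ca Cb : Finset V,
      S ⊆ A ∧ Ca ⊆ A ∧ Cb ⊆ A ∧ (∀ x ∈ Ca, x ∉ S) ∧ (∀ x ∈ Cb, x ∉ S) ∧
      a ∈ Ca ∧ b ∈ Cb ∧
      (∀ x ∈ Ca, ∀ y ∈ Cb, x ≠ y ∧ ¬G.Adj x y) ∧
      (∀ x ∈ Ca, ∀ u ∈ A, G.Adj x u → u ∈ S ∨ u ∈ Ca) ∧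
      (∀ x ∈ Cb, ∀ u ∈ A, G.Adj x u → u ∈ S ∨ u ∈ Cb) ∧
      (∀ s ∈ S, ∀ s' ∈ S, s ≠ s' → G.Adj s s') := by
  classical
  set 𝒮 : Finset (Finset V) :=
    ((A \ {a, b}).powerset).filter (fun S => ¬(Rn G (A \ S)).Reachable a b) with h𝒮
  have h𝒮ne : (A \ {a, b}) ∈ 𝒮 := by
    rw [h𝒮, Finset.mem_filter]
    refine ⟨Finset.mem_powerset_self _, no_reach_pair hab hnadj ?_⟩
    intro x hx
    simp only [Finset.mem_sdiff, Finset.mem_insert, Finset.mem_singleton] at hx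
    by_contra hcon
    push_neg at hcon
    exact hx.2 ⟨hx.1, by tauto⟩
  obtain ⟨S, hS𝒮, hSmin⟩ := Finset.exists_min_image 𝒮 Finset.card ⟨_, h𝒮ne⟩
  rw [h𝒮, Finset.mem_filter, Finset.mem_powerset] at hS𝒮
  obtain ⟨hSsub, hSsep⟩ := hS𝒮
  have hanotS : a ∉ S := fun h => by
    have := hSsub h; simp [Finset.mem_sdiff] at this
  have hbnotS : b ∉ S := fun h => by
    have := hSsub h; simp [Finset.mem_sdiff] at this
  set W := A \ S with hW
  have haW : a ∈ W := Finset.mem_sdiff.mpr ⟨ha, hanotS⟩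
  have hbW : b ∈ W := Finset.mem_sdiff.mpr ⟨hb, hbnotS⟩
  set Ca := W.filter (fun v => (Rn G W).Reachable a v) with hCa
  set Cb := W.filter (fun v => (Rn G W).Reachable b v) with hCb
  have haCa : a ∈ Ca := Finset.mem_filter.mpr ⟨haW, Reachable.refl a⟩
  have hbCb : b ∈ Cb := Finset.mem_filter.mpr ⟨hbW, Reachable.refl b⟩
  have hsepp : ∀ x ∈ Ca, ∀ y ∈ Cb, x ≠ y ∧ ¬G.Adj x y := by
    intro x hx y hy
    obtain ⟨hxW, hrax⟩ := Finset.mem_filter.mp hx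
    obtain ⟨hyW, hrby⟩ := Finset.mem_filter.mp hy
    constructor
    · rintro rfl
      exact hSsep (hrax.trans hrby.symm)
    · intro hadj
      exact hSsep ((hrax.trans (Adj.reachable ⟨hxW, hyW, hadj⟩)).trans hrby.symm)
  have hclosa : ∀ x ∈ Ca, ∀ u ∈ A, G.Adj x u → u ∈ S ∨ u ∈ Ca := by
    intro x hx u hu hadj
    by_cases huS : u ∈ S
    · exact Or.inl huS
    · obtain ⟨hxW, hrax⟩ := Finset.mem_filter.mp hx
      have huW : u ∈ W := Finset.mem_sdiff.mpr ⟨hu, huS⟩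
      exact Or.inr (Finset.mem_filter.mpr
        ⟨huW, hrax.trans (Adj.reachable ⟨hxW, huW, hadj⟩)⟩)
  have hclosb : ∀ x ∈ Cb, ∀ u ∈ A, G.Adj x u → u ∈ S ∨ u ∈ Cb := by
    intro x hx u hu hadj
    by_cases huS : u ∈ S
    · exact Or.inl huS
    · obtain ⟨hxW, hrbx⟩ := Finset.mem_filter.mp hx
      have huW : u ∈ W := Finset.mem_sdiff.mpr ⟨hu, huS⟩
      exact Or.inr (Finset.mem_filter.mpr
        ⟨huW, hrbx.trans (Adj.reachable ⟨hxW, huW, hadj⟩)⟩)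
  -- each vertex of S has a neighbour in Ca and in Cb
  have hnbr : ∀ s ∈ S, (∃ x ∈ Ca, G.Adj s x) ∧ (∃ y ∈ Cb, G.Adj s y) := by
    intro s hsS
    have hsab : s ≠ a ∧ s ≠ b := by
      have := hSsub hsS
      simp only [Finset.mem_sdiff, Finset.mem_insert, Finset.mem_singleton] at this
      tauto
    have hS' : S.erase s ∉ 𝒮 := by
      intro hmem
      have h1 := hSmin _ hmem
      have h2 := Finset.card_erase_lt_of_mem hsS
      omega
    have hsub' : S.erase s ⊆ A \ {a, b} := (Finset.erase_subset _ _).trans hSsub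
    have hreach' : (Rn G (A \ S.erase s)).Reachable a b := by
      by_contra hcon
      exact hS' (by rw [h𝒮, Finset.mem_filter, Finset.mem_powerset]; exact ⟨hsub', hcon⟩)
    obtain ⟨w⟩ := hreach'
    have hPpath : w.bypass.IsPath := SimpleGraph.Walk.bypass_isPath w
    set P := w.bypass with hPdef
    have htrans : ∀ {c d : V}, (Rn G (A \ S.erase s)).Adj c d → c ≠ s → d ≠ s →
        (Rn G (A \ S)).Adj c d := by
      intro c d hcd hc hd
      obtain ⟨h1, h2, h3⟩ := hcd
      rw [Finset.mem_sdiff] at h1 h2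
      refine ⟨Finset.mem_sdiff.mpr ⟨h1.1, ?_⟩, Finset.mem_sdiff.mpr ⟨h2.1, ?_⟩, h3⟩
      · intro hcS; exact h1.2 (Finset.mem_erase.mpr ⟨hc, hcS⟩)
      · intro hdS; exact h2.2 (Finset.mem_erase.mpr ⟨hd, hdS⟩)
    have havoid : ∀ {x y : V} (r : (Rn G (A \ S.erase s)).Walk x y), s ∉ r.support →
        ∀ e ∈ r.edges, e ∈ (Rn G (A \ S)).edgeSet := by
      intro x y r hs e he
      induction e with
      | _ c d =>
        have hcd := r.adj_of_mem_edges he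
        have hc := r.fst_mem_support_of_mem_edges he
        have hd := r.snd_mem_support_of_mem_edges he
        rw [SimpleGraph.mem_edgeSet]
        exact htrans hcd (fun h => hs (h ▸ hc)) (fun h => hs (h ▸ hd))
    have hsP : s ∈ P.support := by
      by_contra hsP
      exact hSsep ⟨P.transfer _ (havoid P hsP)⟩
    constructor
    · -- a side
      obtain ⟨x, r, hadj, hsupp⟩ := walk_head (P.takeUntil s hsP).reverse hsab.1
      have hrpath : (P.takeUntil s hsP).reverse.IsPath := (hPpath.takeUntil hsP).reverse
      have hsnr : s ∉ r.support := by
        have := hrpath.support_nodup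
        rw [hsupp] at this
        exact (List.nodup_cons.mp this).1
      have hxs : x ≠ s := fun h => hsnr (h ▸ r.start_mem_support)
      have hxCa : x ∈ Ca := by
        have hxW : x ∈ W := by
          have h1 := hadj.2.1
          rw [Finset.mem_sdiff] at h1 ⊢
          exact ⟨h1.1, fun hxS => h1.2 (Finset.mem_erase.mpr ⟨hxs, hxS⟩)⟩
        refine Finset.mem_filter.mpr ⟨hxW, ?_⟩
        exact ⟨(r.transfer _ (havoid r hsnr)).reverse⟩
      exact ⟨x, hxCa, hadj.2.2⟩
    · -- b side
      obtain ⟨y, r, hadj, hsupp⟩ := walk_head (P.dropUntil s hsP) hsab.2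
      have hrpath : (P.dropUntil s hsP).IsPath := hPpath.dropUntil hsP
      have hsnr : s ∉ r.support := by
        have := hrpath.support_nodup
        rw [hsupp] at this
        exact (List.nodup_cons.mp this).1
      have hys : y ≠ s := fun h => hsnr (h ▸ r.start_mem_support)
      have hyCb : y ∈ Cb := by
        have hyW : y ∈ W := by
          have h1 := hadj.2.1
          rw [Finset.mem_sdiff] at h1 ⊢
          exact ⟨h1.1, fun hyS => h1.2 (Finset.mem_erase.mpr ⟨hys, hyS⟩)⟩
        refine Finset.mem_filter.mpr ⟨hyW, ?_⟩
        exact Reachable.symm ⟨r.transfer _ (havoid r hsnr)⟩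
      exact ⟨y, hyCb, hadj.2.2⟩
  -- the separator is a clique
  have hSclique : ∀ s ∈ S, ∀ s' ∈ S, s ≠ s' → G.Adj s s' := by
    intro s hs s' hs' hne
    by_contra hnadj'
    obtain ⟨⟨xa, hxaCa, hsxa⟩, ⟨yb, hybCb, hsyb⟩⟩ := hnbr s hs
    obtain ⟨⟨xa', hxa'Ca, hs'xa'⟩, ⟨yb', hyb'Cb, hs'yb'⟩⟩ := hnbr s' hs'
    have hreachC : ∀ (C : Finset V) (c0 : V), c0 ∈ W →
        (∀ v ∈ C, v ∈ W ∧ (Rn G W).Reachable c0 v) →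
        (∀ v ∈ W, (Rn G W).Reachable c0 v → v ∈ C) →
        ∀ x ∈ C, ∀ x' ∈ C, (Rn G C).Reachable x x' := by
      intro C c0 hc0 hmem hback x hx x' hx'
      have htr : ∀ z ∈ C, ∃ r : (Rn G C).Walk c0 z, True := by
        intro z hz
        obtain ⟨w1⟩ := (hmem z hz).2
        refine ⟨w1.transfer _ ?_, trivial⟩
        intro e he
        induction e with
        | _ c d =>
          have hcd := w1.adj_of_mem_edges he
          have hc := w1.fst_mem_support_of_mem_edges he
          have hd := w1.snd_mem_support_of_mem_edges he
          rw [SimpleGraph.mem_edgeSet]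
          have hcW := Rn_support_mem w1 hc0 c hc
          have hdW := Rn_support_mem w1 hc0 d hd
          exact ⟨hback c hcW ⟨w1.takeUntil c hc⟩, hback d hdW ⟨w1.takeUntil d hd⟩, hcd.2.2⟩
      obtain ⟨r1, -⟩ := htr x hx
      obtain ⟨r2, -⟩ := htr x' hx'
      exact ⟨r1.reverse.append r2⟩
    have hmemCa : ∀ v ∈ Ca, v ∈ W ∧ (Rn G W).Reachable a v := fun v hv =>
      ⟨(Finset.mem_filter.mp hv).1, (Finset.mem_filter.mp hv).2⟩
    have hbackCa : ∀ v ∈ W, (Rn G W).Reachable a v → v ∈ Ca := fun v hv hr =>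
      Finset.mem_filter.mpr ⟨hv, hr⟩
    have hmemCb : ∀ v ∈ Cb, v ∈ W ∧ (Rn G W).Reachable b v := fun v hv =>
      ⟨(Finset.mem_filter.mp hv).1, (Finset.mem_filter.mp hv).2⟩
    have hbackCb : ∀ v ∈ W, (Rn G W).Reachable b v → v ∈ Cb := fun v hv hr =>
      Finset.mem_filter.mpr ⟨hv, hr⟩
    set X1 := Ca ∪ {s, s'} with hX1
    set X2 := Cb ∪ {s, s'} with hX2
    have hsX1 : s ∈ X1 := Finset.mem_union_right _ (by simp)
    have hs'X1 : s' ∈ X1 := Finset.mem_union_right _ (by simp)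
    have hsX2 : s ∈ X2 := Finset.mem_union_right _ (by simp)
    have hs'X2 : s' ∈ X2 := Finset.mem_union_right _ (by simp)
    have hreach1 : (Rn G X1).Reachable s s' := by
      have h1 : (Rn G X1).Reachable s xa :=
        Adj.reachable ⟨hsX1, Finset.mem_union_left _ hxaCa, hsxa⟩
      have h2 : (Rn G X1).Reachable xa xa' :=
        (hreachC Ca a haW hmemCa hbackCa xa hxaCa xa' hxa'Ca).mono
          (Rn_mono Finset.subset_union_left)
      have h3 : (Rn G X1).Reachable xa' s' :=
        Adj.reachable ⟨Finset.mem_union_left _ hxa'Ca, hs'X1, hs'xa'.symm⟩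
      exact (h1.trans h2).trans h3
    have hreach2 : (Rn G X2).Reachable s s' := by
      have h1 : (Rn G X2).Reachable s yb :=
        Adj.reachable ⟨hsX2, Finset.mem_union_left _ hybCb, hsyb⟩
      have h2 : (Rn G X2).Reachable yb yb' :=
        (hreachC Cb b hbW hmemCb hbackCb yb hybCb yb' hyb'Cb).mono
          (Rn_mono Finset.subset_union_left)
      have h3 : (Rn G X2).Reachable yb' s' :=
        Adj.reachable ⟨Finset.mem_union_left _ hyb'Cb, hs'X2, hs'yb'.symm⟩
      exact (h1.trans h2).trans h3
    -- shortest paths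
    obtain ⟨w1, hw1len⟩ := hreach1.exists_walk_length_eq_dist
    set p := w1.bypass with hpdef
    have hppath : p.IsPath := w1.bypass_isPath
    have hplen : p.length = (Rn G X1).dist s s' :=
      le_antisymm (hw1len ▸ w1.length_bypass_le) (SimpleGraph.dist_le p)
    have hpmin : ∀ q : (Rn G X1).Walk s s', p.length ≤ q.length := fun q =>
      hplen ▸ SimpleGraph.dist_le q
    obtain ⟨w2, hw2len⟩ := hreach2.exists_walk_length_eq_dist
    set q := w2.bypass with hqdef
    have hqpath : q.IsPath := w2.bypass_isPath
    have hqlen : q.length = (Rn G X2).dist s s' :=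
      le_antisymm (hw2len ▸ w2.length_bypass_le) (SimpleGraph.dist_le q)
    have hqmin : ∀ r : (Rn G X2).Walk s s', q.length ≤ r.length := fun r =>
      hqlen ▸ SimpleGraph.dist_le r
    have hp2 : 2 ≤ p.length := by
      rcases Nat.lt_or_ge p.length 2 with h | h
      · interval_cases hpl : p.length
        · exact absurd (SimpleGraph.Walk.eq_of_length_eq_zero hpl) hne
        · exact absurd (walk_length_one_adj p hpl).2.2 hnadj'
      · exact h
    have hq2 : 2 ≤ q.length := by
      rcases Nat.lt_or_ge q.length 2 with h | h
      · interval_cases hql : q.length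
        · exact absurd (SimpleGraph.Walk.eq_of_length_eq_zero hql) hne
        · exact absurd (walk_length_one_adj q hql).2.2 hnadj'
      · exact h
    have hsuppp : ∀ v ∈ p.support, v ∈ X1 := Rn_support_mem p hsX1
    have hsuppq : ∀ v ∈ q.support, v ∈ X2 := Rn_support_mem q hsX2
    have hX1X2 : ∀ v, v ∈ X1 → v ∈ X2 → v = s ∨ v = s' := by
      intro v h1 h2
      rcases Finset.mem_union.mp h1 with hv1 | hv1
      · rcases Finset.mem_union.mp h2 with hv2 | hv2
        · exact absurd rfl (hsepp v hv1 v hv2).1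
        · simpa using hv2
      · simpa using hv1
    -- assemble the cycle in G
    set pg := toG p with hpgdef
    set qg := toG q with hqgdef
    set c : G.Walk s s := pg.append qg.reverse with hcdef
    have hpgpath : pg.IsPath := toG_isPath hppath
    have hqgpath : qg.IsPath := toG_isPath hqpath
    have hclen : c.length = p.length + q.length := by
      rw [hcdef, SimpleGraph.Walk.length_append, SimpleGraph.Walk.length_reverse,
        toG_length, toG_length]
    have hlen4 : 4 ≤ c.length := by omega
    have hcedges : c.edges = pg.edges ++ qg.edges.reverse := by
      rw [hcdef, SimpleGraph.Walk.edges_append, SimpleGraph.Walk.edges_reverse]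
    have hcsupport : c.support = pg.support ++ qg.reverse.support.tail := by
      rw [hcdef, SimpleGraph.Walk.support_append]
    have hmemp : ∀ {x y : V}, s(x, y) ∈ p.edges → c.toSubgraph.Adj x y := by
      intro x y hmem
      rw [← SimpleGraph.Subgraph.mem_edgeSet, SimpleGraph.Walk.mem_edges_toSubgraph, hcedges]
      exact List.mem_append_left _ (by rw [toG_edges]; exact hmem)
    have hmemq : ∀ {x y : V}, s(x, y) ∈ q.edges → c.toSubgraph.Adj x y := by
      intro x y hmem
      rw [← SimpleGraph.Subgraph.mem_edgeSet, SimpleGraph.Walk.mem_edges_toSubgraph, hcedges]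
      exact List.mem_append_right _ (List.mem_reverse.mpr (by rw [toG_edges]; exact hmem))
    have hcyc : c.IsCycle := by
      refine ⟨⟨⟨?_⟩, ?_⟩, ?_⟩
      · -- IsTrail : edges nodup
        rw [hcedges, List.nodup_append]
        refine ⟨hpgpath.isTrail.edges_nodup, List.nodup_reverse.mpr hqgpath.isTrail.edges_nodup, ?_⟩
        intro e he1 e' he2 hee
        rw [← hee] at he2
        clear hee e'
        rw [List.mem_reverse] at he2
        induction e with
        | _ x y =>
          have hadjxy : G.Adj x y := pg.adj_of_mem_edges he1
          have hxp : x ∈ p.support := by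
            have := pg.fst_mem_support_of_mem_edges he1; rwa [toG_support] at this
          have hyp : y ∈ p.support := by
            have := pg.snd_mem_support_of_mem_edges he1; rwa [toG_support] at this
          have hxq : x ∈ q.support := by
            have := qg.fst_mem_support_of_mem_edges he2; rwa [toG_support] at this
          have hyq : y ∈ q.support := by
            have := qg.snd_mem_support_of_mem_edges he2; rwa [toG_support] at this
          rcases hX1X2 x (hsuppp x hxp) (hsuppq x hxq) with rfl | rfl <;>
            rcases hX1X2 y (hsuppp y hyp) (hsuppq y hyq) with rfl | rfl
          · exact hadjxy.ne rfl
          · exact hnadj' hadjxy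
          · exact hnadj' hadjxy.symm
          · exact hadjxy.ne rfl
      · -- ne nil
        intro hnil
        have : c.length = 0 := by rw [hnil]; rfl
        omega
      · -- support tail nodup
        rw [hcsupport]
        have h1 : pg.support = s :: pg.support.tail := pg.support_eq_cons
        rw [h1, List.cons_append, List.tail_cons]
        rw [List.nodup_append]
        refine ⟨?_, ?_, ?_⟩
        · have := hpgpath.support_nodup
          rw [h1] at this
          exact (List.nodup_cons.mp this).2
        · have := hqgpath.reverse.support_nodup
          rw [qg.reverse.support_eq_cons] at this
          exact (List.nodup_cons.mp this).2
        · intro v hv1 v' hv2 hvv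
          rw [← hvv] at hv2
          clear hvv v'
          have hvp : v ∈ p.support := by
            have : v ∈ pg.support := List.mem_of_mem_tail hv1
            rwa [toG_support] at this
          have hvq : v ∈ q.support := by
            have h2 : v ∈ qg.reverse.support := List.mem_of_mem_tail hv2
            rw [SimpleGraph.Walk.support_reverse, List.mem_reverse, toG_support] at h2
            exact h2
          rcases hX1X2 v (hsuppp v hvp) (hsuppq v hvq) with rfl | rfl
          · -- v = s : s not in pg.support.tail
            have := hpgpath.support_nodup
            rw [h1] at this
            exact (List.nodup_cons.mp this).1 hv1
          · -- v = s' : s' not in qg.reverse.support.tail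
            have := hqgpath.reverse.support_nodup
            rw [qg.reverse.support_eq_cons] at this
            exact (List.nodup_cons.mp this).1 hv2
    -- apply chordality
    obtain ⟨x, y, hxc, hyc, hxy, hnsub⟩ := hch s c hcyc hlen4
    have hmemsup : ∀ {v : V}, v ∈ c.support → v ∈ p.support ∨ v ∈ q.support := by
      intro v hv
      rw [hcsupport] at hv
      rcases List.mem_append.mp hv with h | h
      · left; rwa [toG_support] at h
      · right
        have h2 : v ∈ qg.reverse.support := List.mem_of_mem_tail h
        rw [SimpleGraph.Walk.support_reverse, List.mem_reverse, toG_support] at h2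
        exact h2
    have hchordp : x ∈ p.support → y ∈ p.support → False := by
      intro hxp hyp
      have hadj1 : (Rn G X1).Adj x y := ⟨hsuppp x hxp, hsuppp y hyp, hxy⟩
      exact hnsub (hmemp (minwalk_chord p hpmin hadj1 hxp hyp))
    have hchordq : x ∈ q.support → y ∈ q.support → False := by
      intro hxq hyq
      have hadj1 : (Rn G X2).Adj x y := ⟨hsuppq x hxq, hsuppq y hyq, hxy⟩
      exact hnsub (hmemq (minwalk_chord q hqmin hadj1 hxq hyq))
    have hss'both : ∀ {v : V}, v = s ∨ v = s' → v ∈ p.support ∧ v ∈ q.support := by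
      rintro v (rfl | rfl)
      · exact ⟨p.start_mem_support, q.start_mem_support⟩
      · exact ⟨p.end_mem_support, q.end_mem_support⟩
    rcases hmemsup hxc with hxp | hxq
    · rcases hmemsup hyc with hyp | hyq
      · exact hchordp hxp hyp
      · -- x in p, y in q
        rcases Finset.mem_union.mp (hsuppp x hxp) with hxCa | hxss
        · rcases Finset.mem_union.mp (hsuppq y hyq) with hyCb | hyss
          · exact (hsepp x hxCa y hyCb).2 hxy
          · have : y = s ∨ y = s' := by simpa using hyss
            exact hchordp hxp ((hss'both this).1)
        · have : x = s ∨ x = s' := by simpa using hxss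
          exact hchordq ((hss'both this).2) hyq
    · rcases hmemsup hyc with hyp | hyq
      · -- x in q, y in p
        rcases Finset.mem_union.mp (hsuppp y hyp) with hyCa | hyss
        · rcases Finset.mem_union.mp (hsuppq x hxq) with hxCb | hxss
          · exact (hsepp y hyCa x hxCb).2 hxy.symm
          · have : x = s ∨ x = s' := by simpa using hxss
            exact hchordp ((hss'both this).1) hyp
        · have : y = s ∨ y = s' := by simpa using hyss
          exact hchordq hxq ((hss'both this).2)
      · exact hchordq hxq hyq
  refine ⟨S, Ca, Cb, fun x hx => (Finset.mem_sdiff.mp (hSsub hx)).1,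
    fun x hx => (Finset.mem_sdiff.mp (Finset.mem_filter.mp hx).1).1,
    fun x hx => (Finset.mem_sdiff.mp (Finset.mem_filter.mp hx).1).1,
    fun x hx => (Finset.mem_sdiff.mp (Finset.mem_filter.mp hx).1).2,
    fun x hx => (Finset.mem_sdiff.mp (Finset.mem_filter.mp hx).1).2,
    haCa, hbCb, hsepp, hclosa, hclosb, hSclique⟩

/-- `v` is simplicial within `A`: its neighbourhood inside `A` is a clique. -/
def SimpAt (G : SimpleGraph V) (A : Finset V) (v : V) : Prop :=
  v ∈ A ∧ ∀ x ∈ A, ∀ y ∈ A, G.Adj v x → G.Adj v y → x = y ∨ G.Adj x y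

/-- Dirac: a finite chordal graph restricted to any finset is either a clique or has
two nonadjacent simplicial vertices. -/
lemma dirac (hch : G.IsChordal) :
    ∀ (n : ℕ) (A : Finset V), A.card ≤ n →
      (∀ x ∈ A, ∀ y ∈ A, x ≠ y → G.Adj x y) ∨
      (∃ x ∈ A, ∃ y ∈ A, x ≠ y ∧ ¬G.Adj x y ∧ SimpAt G A x ∧ SimpAt G A y) := by
  intro n
  induction n with
  | zero =>
    intro A hA
    left
    intro x hx
    rw [Finset.card_eq_zero.mp (le_antisymm hA (Nat.zero_le _))] at hx
    simp at hx
  | succ n ih =>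
    intro A hA
    by_cases hcl : ∀ x ∈ A, ∀ y ∈ A, x ≠ y → G.Adj x y
    · exact Or.inl hcl
    right
    push_neg at hcl
    obtain ⟨a, ha, b, hb, hab, hnadj⟩ := hcl
    obtain ⟨S, Ca, Cb, hSA, hCaA, hCbA, hCaS, hCbS, haCa, hbCb, hsepp, hclosa, hclosb, hScl⟩ :=
      sep_clique hch ha hb hab hnadj
    have key : ∀ (C : Finset V) (c0 w : V), c0 ∈ C → C ⊆ A → (∀ x ∈ C, x ∉ S) →
        (∀ x ∈ C, ∀ u ∈ A, G.Adj x u → u ∈ S ∨ u ∈ C) → w ∈ A → w ∉ C → w ∉ S →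
        ∃ x ∈ C, SimpAt G A x := by
      intro C c0 w hc0 hCA hCS hclos hwA hwC hwS
      have hsub : C ∪ S ⊆ A := Finset.union_subset hCA hSA
      have hwCS : w ∉ C ∪ S := by
        rw [Finset.mem_union]; rintro (h | h); exacts [hwC h, hwS h]
      have hcard : (C ∪ S).card ≤ n := by
        have hlt : (C ∪ S).card < A.card :=
          Finset.card_lt_card ⟨hsub, fun hcon => hwCS (hcon hwA)⟩
        omega
      have extend : ∀ z, z ∈ C → (∀ x ∈ C ∪ S, ∀ y ∈ C ∪ S, G.Adj z x → G.Adj z y →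
          x = y ∨ G.Adj x y) → SimpAt G A z := by
        intro z hzC hypo
        refine ⟨hCA hzC, ?_⟩
        intro x hxA y hyA hadjx hadjy
        have hx' : x ∈ C ∪ S := by
          rcases hclos z hzC x hxA hadjx with h | h
          · exact Finset.mem_union_right _ h
          · exact Finset.mem_union_left _ h
        have hy' : y ∈ C ∪ S := by
          rcases hclos z hzC y hyA hadjy with h | h
          · exact Finset.mem_union_right _ h
          · exact Finset.mem_union_left _ h
        exact hypo x hx' y hy' hadjx hadjy
      rcases ih (C ∪ S) hcard with hclq | ⟨x, hx, y, hy, hxy, hnxy, hsx, hsy⟩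
      · refine ⟨c0, hc0, extend c0 hc0 ?_⟩
        intro x hx y hy hadjx hadjy
        by_cases hxe : x = y
        · exact Or.inl hxe
        · exact Or.inr (hclq x hx y hy hxe)
      · have hor : x ∉ S ∨ y ∉ S := by
          by_contra hcon
          push_neg at hcon
          exact hnxy (hScl x hcon.1 y hcon.2 hxy)
        have main : ∀ z, z ∈ C ∪ S → z ∉ S → SimpAt G (C ∪ S) z → ∃ x ∈ C, SimpAt G A x := by
          intro z hzCS hzS hsz
          have hzC : z ∈ C := (Finset.mem_union.mp hzCS).resolve_right hzS
          exact ⟨z, hzC, extend z hzC hsz.2⟩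
        rcases hor with h | h
        · exact main x hx h hsx
        · exact main y hy h hsy
    have hbCa : b ∉ Ca := fun h => (hsepp b h b hbCb).1 rfl
    have haCb : a ∉ Cb := fun h => (hsepp a haCa a h).1 rfl
    obtain ⟨xa, hxaCa, hsxa⟩ :=
      key Ca a b haCa hCaA hCaS hclosa hb hbCa (fun h => hCbS b hbCb h)
    obtain ⟨yb, hybCb, hsyb⟩ :=
      key Cb b a hbCb hCbA hCbS hclosb ha haCb (fun h => hCaS a haCa h)
    exact ⟨xa, hCaA hxaCa, yb, hCbA hybCb, (hsepp xa hxaCa yb hybCb).1,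
      (hsepp xa hxaCa yb hybCb).2, hsxa, hsyb⟩

lemma exists_simp (hch : G.IsChordal) {A : Finset V} (hA : A.Nonempty) :
    ∃ v, SimpAt G A v := by
  rcases dirac hch A.card A le_rfl with hclq | ⟨x, hx, -, -, -, -, hsx, -⟩
  · obtain ⟨v, hv⟩ := hA
    refine ⟨v, hv, ?_⟩
    intro x hxA y hyA _ _
    by_cases hxy : x = y
    · exact Or.inl hxy
    · exact Or.inr (hclq x hxA y hyA hxy)
  · exact ⟨x, hsx⟩

/-- A list is a perfect elimination ordering if each vertex's neighbours among later
vertices form a clique. -/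
def PeoList (G : SimpleGraph V) : List V → Prop
  | [] => True
  | v :: l => (∀ b ∈ l, ∀ c ∈ l, G.Adj v b → G.Adj v c → b = c ∨ G.Adj b c) ∧ PeoList G l

lemma peo_exists_aux (hch : G.IsChordal) :
    ∀ (n : ℕ) (A : Finset V), A.card = n →
      ∃ l : List V, l.Nodup ∧ l.toFinset = A ∧ PeoList G l := by
  classical
  intro n
  induction n with
  | zero =>
    intro A hA
    exact ⟨[], by simp, by simp [Finset.card_eq_zero.mp hA], trivial⟩
  | succ n ih =>
    intro A hA
    have hAne : A.Nonempty := Finset.card_pos.mp (by omega)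
    obtain ⟨v, hvA, hsimp⟩ := exists_simp hch hAne
    obtain ⟨l, hnd, htf, hp⟩ := ih (A.erase v) (by rw [Finset.card_erase_of_mem hvA]; omega)
    refine ⟨v :: l, ?_, ?_, ?_, hp⟩
    · rw [List.nodup_cons]
      refine ⟨fun hvl => ?_, hnd⟩
      have : v ∈ A.erase v := htf ▸ List.mem_toFinset.mpr hvl
      exact (Finset.mem_erase.mp this).1 rfl
    · rw [List.toFinset_cons, htf, Finset.insert_erase hvA]
    · intro b hb c hc hab hac
      have hbA : b ∈ A := Finset.mem_of_mem_erase (htf ▸ List.mem_toFinset.mpr hb)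
      have hcA : c ∈ A := Finset.mem_of_mem_erase (htf ▸ List.mem_toFinset.mpr hc)
      exact hsimp b hbA c hcA hab hac

lemma peo_global : ∀ (l : List V), PeoList G l →
    ∀ a b c : V, a ∈ l → b ∈ l → c ∈ l →
      List.idxOf a l < List.idxOf b l → List.idxOf a l < List.idxOf c l →
      G.Adj a b → G.Adj a c → b = c ∨ G.Adj b c := by
  classical
  intro l
  induction l with
  | nil => intro _ a _ _ ha; simp at ha
  | cons v l ih =>
    intro hp a b c ha hb hc hab hac hadjb hadjc
    by_cases hav : a = v
    · subst hav
      have hbv : b ≠ a := by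
        rintro rfl
        rw [List.idxOf_cons_self] at hab
        exact absurd hab (by omega)
      have hcv : c ≠ a := by
        rintro rfl
        rw [List.idxOf_cons_self] at hac
        exact absurd hac (by omega)
      exact hp.1 b ((List.mem_cons.mp hb).resolve_left hbv) c
        ((List.mem_cons.mp hc).resolve_left hcv) hadjb hadjc
    · have ha' : a ∈ l := (List.mem_cons.mp ha).resolve_left hav
      have hbv : b ≠ v := by
        rintro rfl
        rw [List.idxOf_cons_self] at hab
        exact absurd hab (by omega)
      have hcv : c ≠ v := by
        rintro rfl
        rw [List.idxOf_cons_self] at hac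
        exact absurd hac (by omega)
      have hb' : b ∈ l := (List.mem_cons.mp hb).resolve_left hbv
      have hc' : c ∈ l := (List.mem_cons.mp hc).resolve_left hcv
      rw [List.idxOf_cons_ne _ (Ne.symm hav), List.idxOf_cons_ne _ (Ne.symm hbv)] at hab
      rw [List.idxOf_cons_ne _ (Ne.symm hav), List.idxOf_cons_ne _ (Ne.symm hcv)] at hac
      exact ih hp.2 a b c ha' hb' hc' (by omega) (by omega) hadjb hadjc

section Coloring

variable [Fintype V]

/-- position of a vertex in the elimination ordering -/
noncomputable def idx (l : List V) (v : V) : ℕ := List.idxOf v l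

/-- later neighbours of `u` -/
noncomputable def Ngt (G : SimpleGraph V) (l : List V) (u : V) : Finset V :=
  Finset.univ.filter (fun w => G.Adj u w ∧ idx l u < idx l w)

/-- the forbidden set for the greedy colouring of `u` -/
noncomputable def Fset (G : SimpleGraph V) (l : List V) (u : V) : Finset V :=
  Finset.univ.filter (fun w => idx l u < idx l w ∧
    (G.Adj u w ∨ ∃ z, idx l u < idx l z ∧ idx l z < idx l w ∧ G.Adj u z ∧ G.Adj z w))

noncomputable def pick {M : ℕ} (hM : 0 < M) (s : Finset (Fin M)) : Fin M :=
  if h : (Finset.univ \ s).Nonempty then h.choose else ⟨0, hM⟩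

lemma pick_not_mem {M : ℕ} (hM : 0 < M) {s : Finset (Fin M)} (h : s.card < M) :
    pick hM s ∉ s := by
  have hne : (Finset.univ \ s).Nonempty := by
    rw [Finset.sdiff_nonempty]
    intro hsub
    have := Finset.card_le_card hsub
    rw [Finset.card_univ, Fintype.card_fin] at this
    omega
  rw [pick, dif_pos hne]
  exact (Finset.mem_sdiff.mp hne.choose_spec).2

noncomputable def lam (G : SimpleGraph V) (l : List V) {M : ℕ} (hM : 0 < M) (u : V) :
    Fin M :=
  pick hM ((Fset G l u).attach.image (fun w => lam G l hM w.1))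
termination_by l.length - idx l u
decreasing_by
  have hw := w.2
  simp only [Fset, Finset.mem_filter] at hw
  have h1 : idx l u < idx l w.1 := hw.2.1
  have h2 : idx l w.1 ≤ l.length := List.idxOf_le_length
  exact Nat.sub_lt_sub_left (lt_of_lt_of_le h1 h2) h1

lemma lam_ne (G : SimpleGraph V) (l : List V) {M : ℕ} (hM : 0 < M)
    (hcard : ∀ u : V, (Fset G l u).card < M) {u w : V} (hw : w ∈ Fset G l u) :
    lam G l hM u ≠ lam G l hM w := by
  intro heq
  have h1 : lam G l hM u ∉ (Fset G l u).attach.image (fun w => lam G l hM w.1) := by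
    rw [lam.eq_def]
    apply pick_not_mem hM
    calc ((Fset G l u).attach.image (fun w => lam G l hM w.1)).card
        ≤ (Fset G l u).attach.card := Finset.card_image_le
      _ = (Fset G l u).card := Finset.card_attach
      _ < M := hcard u
  exact h1 (heq ▸ Finset.mem_image.mpr ⟨⟨w, hw⟩, Finset.mem_attach _ _, rfl⟩)

lemma clique_card_le {t : ℕ} (hcf : G.CliqueFree (t + 1)) {s : Finset V}
    (h : ∀ x ∈ s, ∀ y ∈ s, x ≠ y → G.Adj x y) : s.card ≤ t := by
  by_contra hc
  push_neg at hc
  obtain ⟨u, hu, hcard⟩ := Finset.exists_subset_card_eq (Nat.succ_le_of_lt hc)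
  refine hcf u ⟨?_, hcard⟩
  intro x hx y hy hxy
  exact h x (hu (Finset.mem_coe.mp hx)) y (hu (Finset.mem_coe.mp hy)) hxy

lemma ngt_clique {l : List V}
    (hpeo : ∀ a b c : V, idx l a < idx l b → idx l a < idx l c →
      G.Adj a b → G.Adj a c → b = c ∨ G.Adj b c) (z : V) :
    ∀ x ∈ insert z (Ngt G l z), ∀ y ∈ insert z (Ngt G l z), x ≠ y → G.Adj x y := by
  intro x hx y hy hxy
  rw [Finset.mem_insert] at hx hy
  have hmem : ∀ w, w ∈ Ngt G l z → G.Adj z w ∧ idx l z < idx l w := by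
    intro w hw
    rw [Ngt, Finset.mem_filter] at hw
    exact hw.2
  rcases hx with rfl | hx
  · rcases hy with rfl | hy
    · exact absurd rfl hxy
    · exact (hmem y hy).1
  · rcases hy with rfl | hy
    · exact (hmem x hx).1.symm
    · exact ((hpeo z x y (hmem x hx).2 (hmem y hy).2 (hmem x hx).1 (hmem y hy).1).resolve_left
        hxy)

lemma card_ngt_le {t : ℕ} (hcf : G.CliqueFree (t + 1)) {l : List V}
    (hpeo : ∀ a b c : V, idx l a < idx l b → idx l a < idx l c →
      G.Adj a b → G.Adj a c → b = c ∨ G.Adj b c) (z : V) :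
    (Ngt G l z).card + 1 ≤ t := by
  have h1 := clique_card_le hcf (ngt_clique hpeo z)
  have h2 : z ∉ Ngt G l z := by
    rw [Ngt, Finset.mem_filter]
    rintro ⟨-, -, h⟩
    omega
  rw [Finset.card_insert_of_notMem h2] at h1
  omega

lemma card_union_ngt_le {t : ℕ} (hcf : G.CliqueFree (t + 1)) {l : List V}
    (hl : ∀ v : V, v ∈ l)
    (hpeo : ∀ a b c : V, idx l a < idx l b → idx l a < idx l c →
      G.Adj a b → G.Adj a c → b = c ∨ G.Adj b c) :
    ∀ (k : ℕ) (Z : Finset V), Z.card = k →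
      (∀ x ∈ Z, ∀ y ∈ Z, x ≠ y → G.Adj x y) →
      (Z ∪ Z.biUnion (Ngt G l)).card ≤ ∑ i ∈ Finset.range k, (t - i) := by
  intro k
  induction k with
  | zero =>
    intro Z hZ _
    rw [Finset.card_eq_zero.mp hZ]
    simp
  | succ k ih =>
    intro Z hZcard hZclq
    have hZne : Z.Nonempty := Finset.card_pos.mp (by omega)
    obtain ⟨z₁, hz₁, hz₁min⟩ := Finset.exists_min_image Z (idx l) hZne
    set Z' := Z.erase z₁ with hZ'
    have hZ'card : Z'.card = k := by rw [hZ', Finset.card_erase_of_mem hz₁]; omega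
    have hZ'clq : ∀ x ∈ Z', ∀ y ∈ Z', x ≠ y → G.Adj x y := by
      intro x hx y hy hxy
      exact hZclq x (Finset.mem_of_mem_erase hx) y (Finset.mem_of_mem_erase hy) hxy
    have hZ'sub : Z' ⊆ Ngt G l z₁ := by
      intro z' hz'
      obtain ⟨hne, hz'Z⟩ := Finset.mem_erase.mp hz'
      rw [Ngt, Finset.mem_filter]
      refine ⟨Finset.mem_univ _, hZclq z₁ hz₁ z' hz'Z (Ne.symm hne), ?_⟩
      have hle := hz₁min z' hz'Z
      have : idx l z' ≠ idx l z₁ := by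
        intro heq
        exact hne ((List.idxOf_inj (hl z')).mp heq)
      omega
    have hZt : Z.card ≤ t := clique_card_le hcf hZclq
    have hsub : Z ∪ Z.biUnion (Ngt G l) ⊆
        (Z' ∪ Z'.biUnion (Ngt G l)) ∪ insert z₁ (Ngt G l z₁ \ Z') := by
      intro w hw
      rcases Finset.mem_union.mp hw with hw | hw
      · by_cases hwz : w = z₁
        · exact Finset.mem_union_right _ (hwz ▸ Finset.mem_insert_self _ _)
        · exact Finset.mem_union_left _
            (Finset.mem_union_left _ (Finset.mem_erase.mpr ⟨hwz, hw⟩))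
      · obtain ⟨z, hz, hwz⟩ := Finset.mem_biUnion.mp hw
        by_cases hzz : z = z₁
        · subst hzz
          by_cases hwZ' : w ∈ Z'
          · exact Finset.mem_union_left _ (Finset.mem_union_left _ hwZ')
          · exact Finset.mem_union_right _
              (Finset.mem_insert_of_mem (Finset.mem_sdiff.mpr ⟨hwz, hwZ'⟩))
        · exact Finset.mem_union_left _ (Finset.mem_union_right _
            (Finset.mem_biUnion.mpr ⟨z, Finset.mem_erase.mpr ⟨hzz, hz⟩, hwz⟩))
    have hcard1 : (Z ∪ Z.biUnion (Ngt G l)).card ≤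
        (Z' ∪ Z'.biUnion (Ngt G l)).card + (1 + (Ngt G l z₁ \ Z').card) := by
      calc (Z ∪ Z.biUnion (Ngt G l)).card
          ≤ ((Z' ∪ Z'.biUnion (Ngt G l)) ∪ insert z₁ (Ngt G l z₁ \ Z')).card :=
            Finset.card_le_card hsub
        _ ≤ (Z' ∪ Z'.biUnion (Ngt G l)).card + (insert z₁ (Ngt G l z₁ \ Z')).card :=
            Finset.card_union_le _ _
        _ ≤ (Z' ∪ Z'.biUnion (Ngt G l)).card + (1 + (Ngt G l z₁ \ Z').card) := by
            have := Finset.card_insert_le z₁ (Ngt G l z₁ \ Z')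
            omega
    have hsd : (Ngt G l z₁ \ Z').card = (Ngt G l z₁).card - k := by
      rw [Finset.card_sdiff_of_subset hZ'sub, hZ'card]
    have hngt := card_ngt_le hcf hpeo z₁
    have hih := ih Z' hZ'card hZ'clq
    rw [Finset.sum_range_succ]
    omega

lemma gauss_sum : ∀ t : ℕ, 1 ≤ t →
    (∑ i ∈ Finset.range (t - 1), (t - i)) + 1 = (t + 1).choose 2 := by
  intro t
  induction t with
  | zero => omega
  | succ t ih =>
    intro _
    by_cases ht : t = 0
    · subst ht; decide
    · have ht' : 1 ≤ t := by omega
      have ihv := ih ht'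
      have e1 : t + 1 - 1 = t := by omega
      rw [e1]
      have h1 : ∑ i ∈ Finset.range t, (t + 1 - i) = (∑ i ∈ Finset.range t, (t - i)) + t := by
        have hcg : ∀ i ∈ Finset.range t, t + 1 - i = (t - i) + 1 := by
          intro i hi
          have := Finset.mem_range.mp hi
          omega
        rw [Finset.sum_congr rfl hcg, Finset.sum_add_distrib, Finset.sum_const,
          Finset.card_range, smul_eq_mul, mul_one]
      have h2 : ∑ i ∈ Finset.range ((t-1)+1), (t - i)
          = (∑ i ∈ Finset.range (t-1), (t - i)) + (t - (t-1)) := Finset.sum_range_succ _ _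
      have e3 : (t-1)+1 = t := by omega
      have e4 : t - (t-1) = 1 := by omega
      rw [e3, e4] at h2
      have h3 : (t + 1 + 1).choose 2 = (t+1).choose 2 + (t+1) := by
        rw [Nat.choose_succ_succ, Nat.choose_one_right]
        exact Nat.add_comm _ _
      omega

lemma card_Fset_le {t : ℕ} (hcf : G.CliqueFree (t + 1)) {l : List V}
    (hl : ∀ v : V, v ∈ l)
    (hpeo : ∀ a b c : V, idx l a < idx l b → idx l a < idx l c →
      G.Adj a b → G.Adj a c → b = c ∨ G.Adj b c)
    (ht : 1 ≤ t) (u : V) :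
    (Fset G l u).card < (t + 1).choose 2 := by
  have hsub : Fset G l u ⊆ (Ngt G l u) ∪ (Ngt G l u).biUnion (Ngt G l) := by
    intro w hw
    simp only [Fset, Finset.mem_filter] at hw
    obtain ⟨-, hlt, hor⟩ := hw
    rcases hor with hadj | ⟨z, hz1, hz2, hz3, hz4⟩
    · exact Finset.mem_union_left _
        (by rw [Ngt, Finset.mem_filter]; exact ⟨Finset.mem_univ _, hadj, hlt⟩)
    · refine Finset.mem_union_right _ (Finset.mem_biUnion.mpr ⟨z, ?_, ?_⟩)
      · rw [Ngt, Finset.mem_filter]; exact ⟨Finset.mem_univ _, hz3, hz1⟩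
      · rw [Ngt, Finset.mem_filter]; exact ⟨Finset.mem_univ _, hz4, hz2⟩
  have hclq : ∀ x ∈ Ngt G l u, ∀ y ∈ Ngt G l u, x ≠ y → G.Adj x y := by
    intro x hx y hy hxy
    exact ngt_clique hpeo u x (Finset.mem_insert_of_mem hx) y (Finset.mem_insert_of_mem hy) hxy
  have h1 := card_union_ngt_le hcf hl hpeo (Ngt G l u).card (Ngt G l u) rfl hclq
  have hk := card_ngt_le hcf hpeo u
  have h2 : (∑ i ∈ Finset.range (Ngt G l u).card, (t - i))
      ≤ ∑ i ∈ Finset.range (t - 1), (t - i) :=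
    Finset.sum_le_sum_of_subset (Finset.range_subset_range.mpr (by omega))
  have h3 := gauss_sum t ht
  have h4 := Finset.card_le_card hsub
  omega

lemma max_mem_Fset {l : List V} (hl : ∀ v : V, v ∈ l)
    (hpeo : ∀ a b c : V, idx l a < idx l b → idx l a < idx l c →
      G.Adj a b → G.Adj a c → b = c ∨ G.Adj b c)
    {K L : Finset V} (hK : ∀ p ∈ K, ∀ q ∈ K, p ≠ q → G.Adj p q)
    (hL : ∀ p ∈ L, ∀ q ∈ L, p ≠ q → G.Adj p q)
    (hdisj : ∀ p ∈ K, p ∉ L)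
    {x y u w : V} (hx : x ∈ K) (hy : y ∈ L) (hxy : G.Adj x y)
    (huK : u ∈ K) (humax : ∀ p ∈ K, idx l p ≤ idx l u)
    (hwL : w ∈ L) (hwmax : ∀ p ∈ L, idx l p ≤ idx l w)
    (hlt : idx l u < idx l w) : w ∈ Fset G l u := by
  have idxlt : ∀ p q : V, p ≠ q → idx l p ≤ idx l q → idx l p < idx l q := by
    intro p q hne hle
    have : idx l p ≠ idx l q := fun h => hne ((List.idxOf_inj (hl p)).mp h)
    omega
  have huw : u ≠ w := fun h => hdisj u huK (h ▸ hwL)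
  simp only [Fset, Finset.mem_filter]
  refine ⟨Finset.mem_univ _, hlt, ?_⟩
  have step2 : G.Adj u y →
      (G.Adj u w ∨ ∃ z, idx l u < idx l z ∧ idx l z < idx l w ∧ G.Adj u z ∧ G.Adj z w) := by
    intro huy
    by_cases hyw : y = w
    · exact Or.inl (hyw ▸ huy)
    · have hylt : idx l y < idx l w := idxlt y w hyw (hwmax y hy)
      have hyadjw : G.Adj y w := hL y hy w hwL hyw
      rcases lt_trichotomy (idx l u) (idx l y) with h | h | h
      · exact Or.inr ⟨y, h, hylt, huy, hyadjw⟩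
      · exact absurd ((List.idxOf_inj (hl u)).mp h)
          (fun he => hdisj u huK (he ▸ hy))
      · rcases hpeo y u w h hylt huy.symm hyadjw with he | hadj
        · exact absurd he huw
        · exact Or.inl hadj
  by_cases hxu : x = u
  · exact step2 (hxu ▸ hxy)
  · have hxlt : idx l x < idx l u := idxlt x u hxu (humax x hx)
    have hxadju : G.Adj x u := hK x hx u huK hxu
    by_cases hyw : y = w
    · subst hyw
      rcases hpeo x u y hxlt (lt_trans hxlt hlt) hxadju hxy with he | hadj
      · exact absurd he huw
      · exact Or.inl hadj
    · have hylt : idx l y < idx l w := idxlt y w hyw (hwmax y hy)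
      have hyadjw : G.Adj y w := hL y hy w hwL hyw
      have hxyne : x ≠ y := fun h => hdisj x hx (h ▸ hy)
      rcases lt_trichotomy (idx l x) (idx l y) with h | h | h
      · rcases hpeo x u y hxlt h hxadju hxy with he | hadj
        · exact absurd he (fun he => hdisj u huK (he ▸ hy))
        · exact step2 hadj
      · exact absurd ((List.idxOf_inj (hl x)).mp h) hxyne
      · have h1 : G.Adj x w := by
          rcases hpeo y x w h hylt hxy.symm hyadjw with he | hadj
          · exact absurd he (fun he => hdisj x hx (he ▸ hwL))
          · exact hadj
        rcases hpeo x u w hxlt (lt_trans hxlt hlt) hxadju h1 with he | hadj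
        · exact absurd he huw
        · exact Or.inl hadj

end Coloring

end ACProof

/-- If `G` is a finite chordal graph with clique number at most `t`, then
the chromatic number of the adjacent-cliques graph of `G` is at most `(t+1) choose 2`. -/
theorem chromaticNumber_acGraph_le {V : Type*} [Fintype V] (G : SimpleGraph V)
    (t : ℕ) (hch : G.IsChordal) (hcf : G.CliqueFree (t + 1)) :
    G.acGraph.chromaticNumber ≤ ((t + 1).choose 2 : ℕ) := by
  classical
  open ACProof in
  by_cases hV : Nonempty V
  · obtain ⟨v0⟩ := hV
    have ht : 1 ≤ t := by
      by_contra hcon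
      have ht0 : t = 0 := by omega
      subst ht0
      exact hcf {v0} ⟨by simp [SimpleGraph.isClique_iff], by simp⟩
    have hM : 0 < (t + 1).choose 2 := Nat.choose_pos (by omega)
    obtain ⟨l, hlnd, hltf, hp⟩ := peo_exists_aux hch (Finset.univ.card) Finset.univ rfl
    have hl : ∀ v : V, v ∈ l := fun v =>
      List.mem_toFinset.mp (hltf ▸ Finset.mem_univ v)
    have hpeo : ∀ a b c : V, idx l a < idx l b → idx l a < idx l c →
        G.Adj a b → G.Adj a c → b = c ∨ G.Adj b c := by
      intro a b c h1 h2 h3 h4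
      exact peo_global l hp a b c (hl a) (hl b) (hl c) h1 h2 h3 h4
    have hcards : ∀ u : V, (Fset G l u).card < (t + 1).choose 2 :=
      card_Fset_le hcf hl hpeo ht
    have hmaxex : ∀ K : {K : Finset V // K.Nonempty ∧ G.IsClique (K : Set V)},
        ∃ u ∈ K.1, ∀ p ∈ K.1, idx l p ≤ idx l u :=
      fun K => Finset.exists_max_image K.1 (idx l) K.2.1
    choose mx hmx1 hmx2 using hmaxex
    have hclq : ∀ K : {K : Finset V // K.Nonempty ∧ G.IsClique (K : Set V)},
        ∀ p ∈ K.1, ∀ q ∈ K.1, p ≠ q → G.Adj p q := by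
      intro K p hp q hq hne
      exact K.2.2 (Finset.mem_coe.mpr hp) (Finset.mem_coe.mpr hq) hne
    have hcol : G.acGraph.Colorable ((t + 1).choose 2) := by
      refine ⟨⟨fun K => lam G l hM (mx K), ?_⟩⟩
      intro K L hKL
      obtain ⟨hdisj, x, hx, y, hy, hxy⟩ := hKL
      have hdisjKL : ∀ p ∈ K.1, p ∉ L.1 := fun p hp hpL =>
        (Finset.disjoint_left.mp hdisj) hp hpL
      have hdisjLK : ∀ p ∈ L.1, p ∉ K.1 := fun p hp hpK =>
        (Finset.disjoint_left.mp hdisj) hpK hp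
      rcases lt_trichotomy (idx l (mx K)) (idx l (mx L)) with h | h | h
      · exact lam_ne G l hM hcards
          (max_mem_Fset hl hpeo (hclq K) (hclq L) hdisjKL hx hy hxy
            (hmx1 K) (hmx2 K) (hmx1 L) (hmx2 L) h)
      · exact absurd ((List.idxOf_inj (hl (mx K))).mp h)
          (fun he => hdisjKL (mx K) (hmx1 K) (he ▸ hmx1 L))
      · exact (lam_ne G l hM hcards
          (max_mem_Fset hl hpeo (hclq L) (hclq K) hdisjLK hy hx hxy.symm
            (hmx1 L) (hmx2 L) (hmx1 K) (hmx2 K) h)).symm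
    exact hcol.chromaticNumber_le
  · have hie : IsEmpty V := not_nonempty_iff.mp hV
    have hieK : IsEmpty {K : Finset V // K.Nonempty ∧ G.IsClique (K : Set V)} := by
      constructor
      rintro ⟨K, hKne, -⟩
      obtain ⟨v, -⟩ := hKne
      exact hie.elim v
    have hcol : G.acGraph.Colorable 0 :=
      ⟨⟨fun K => isEmptyElim K, fun {a} _ => isEmptyElim a⟩⟩
    refine le_trans hcol.chromaticNumber_le ?_
    simp
end

section
/- Let G be a finite connected chordal graph and let x be any vertex of G. Then G is shadow complete with respect to x; that is, for every non-negative integer ℓ and every connected component C of the subgraph of G induced by the vertices at distance greater than ℓ from x, the set of vertices at distance exactly ℓ from x that have a neighbour in C induces a complete graph. -/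
open SimpleGraph

namespace ShadowAux

open SimpleGraph Walk

variable {V : Type*} {G : SimpleGraph V}

/-- A walk is `Good T` if all its internal vertices lie in `T`. -/
def Good (G : SimpleGraph V) (T : Set V) {w₁ w₂ : V} (p : G.Walk w₁ w₂) : Prop :=
  ∀ v ∈ p.support, v ≠ w₁ → v ≠ w₂ → v ∈ T

lemma good_of_subset {T : Set V} {w₁ w₂ : V} {p q : G.Walk w₁ w₂}
    (h : Good G T p) (hs : q.support ⊆ p.support) : Good G T q :=
  fun v hv => h v (hs hv)

lemma exists_min [DecidableEq V] (T : Set V) {w₁ w₂ : V}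
    (h : ∃ p : G.Walk w₁ w₂, Good G T p) :
    ∃ p : G.Walk w₁ w₂, Good G T p ∧ p.IsPath ∧
      ∀ q : G.Walk w₁ w₂, Good G T q → p.length ≤ q.length := by
  classical
  have hx : ∃ n, ∃ p : G.Walk w₁ w₂, Good G T p ∧ p.length = n := by
    obtain ⟨p, hp⟩ := h; exact ⟨p.length, p, hp, rfl⟩
  obtain ⟨p, hp, hl⟩ := Nat.find_spec hx
  refine ⟨p.bypass, good_of_subset hp p.support_bypass_subset, p.bypass_isPath, ?_⟩
  intro q hq
  have h1 : Nat.find hx ≤ q.length := Nat.find_min' hx ⟨q, hq, rfl⟩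
  have h2 : p.bypass.length ≤ p.length := p.length_bypass_le
  omega

/-- In a minimal good walk, any edge of `G` between support vertices is a walk edge. -/
lemma chord [DecidableEq V] (T : Set V) {w₁ w₂ : V} {p : G.Walk w₁ w₂}
    (hgood : Good G T p)
    (hmin : ∀ q : G.Walk w₁ w₂, Good G T q → p.length ≤ q.length)
    {a b : V} (ha : a ∈ p.support) (hb : b ∈ p.support) (hab : G.Adj a b) :
    p.toSubgraph.Adj a b := by
  have key : ∀ (a b : V) (ha : a ∈ p.support) (hb : b ∈ p.support), G.Adj a b →
      (p.takeUntil b hb).length ≤ (p.takeUntil a ha).length + 1 := by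
    intro a b ha hb hab
    set q : G.Walk w₁ w₂ :=
      (p.takeUntil a ha).append (Walk.cons hab (p.dropUntil b hb)) with hq
    have hqgood : Good G T q := by
      refine good_of_subset hgood ?_
      intro v hv
      rw [hq, mem_support_append_iff] at hv
      rcases hv with hv | hv
      · exact p.support_takeUntil_subset ha hv
      · rw [Walk.support_cons, List.mem_cons] at hv
        rcases hv with rfl | hv
        · exact ha
        · exact p.support_dropUntil_subset hb hv
    have hle := hmin q hqgood
    have hlq : q.length = (p.takeUntil a ha).length + 1 + (p.dropUntil b hb).length := by
      simp [hq, Walk.length_append]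
      omega
    have hp : (p.takeUntil b hb).length + (p.dropUntil b hb).length = p.length := by
      have := congrArg Walk.length (p.take_spec hb)
      rwa [Walk.length_append] at this
    omega
  have hga : ∀ (a : V) (ha : a ∈ p.support), p.getVert (p.takeUntil a ha).length = a := by
    intro a ha
    have h := congrArg (fun w : G.Walk w₁ w₂ => w.getVert (p.takeUntil a ha).length)
      (p.take_spec ha)
    simp only [Walk.getVert_append, lt_irrefl, if_false, Nat.sub_self, Walk.getVert_zero] at h
    exact h.symm
  have h1 := key a b ha hb hab
  have h2 := key b a hb ha hab.symm
  have hta := hga a ha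
  have htb := hga b hb
  have hne : (p.takeUntil a ha).length ≠ (p.takeUntil b hb).length := by
    intro h
    exact hab.ne (by rw [← hta, ← htb, h])
  have hlea := p.length_takeUntil_le ha
  have hleb := p.length_takeUntil_le hb
  rcases Nat.lt_or_ge (p.takeUntil a ha).length (p.takeUntil b hb).length with hlt | hge
  · have heq : (p.takeUntil b hb).length = (p.takeUntil a ha).length + 1 := by omega
    have hi : (p.takeUntil a ha).length < p.length := by omega
    have := p.toSubgraph_adj_getVert hi
    rwa [hta, ← heq, htb] at this
  · have hlt : (p.takeUntil b hb).length < (p.takeUntil a ha).length := by omega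
    have heq : (p.takeUntil a ha).length = (p.takeUntil b hb).length + 1 := by omega
    have hi : (p.takeUntil b hb).length < p.length := by omega
    have := p.toSubgraph_adj_getVert hi
    rw [htb, ← heq, hta] at this
    exact this.symm

/-- Internal vertices of a geodesic from `x` are strictly closer to `x`. -/
lemma dist_lt_of_mem_support [DecidableEq V] (hconn : G.Connected) {x w : V}
    (p : G.Walk x w) (hp : p.length = G.dist x w) {v : V}
    (hv : v ∈ p.support) (hne : v ≠ w) : G.dist x v < G.dist x w := by
  have h1 : G.dist x v ≤ (p.takeUntil v hv).length := dist_le _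
  have h2 : G.dist v w ≤ (p.dropUntil v hv).length := dist_le _
  have h3 : (p.takeUntil v hv).length + (p.dropUntil v hv).length = p.length := by
    have := congrArg Walk.length (p.take_spec hv)
    rwa [Walk.length_append] at this
  have h4 : 0 < G.dist v w := hconn.pos_dist_of_ne hne
  omega

end ShadowAux

open ShadowAux in
/-- A finite connected chordal graph is shadow complete with respect to any
vertex: if `w₁, w₂` are at distance exactly `ℓ` from `x` and each has a neighbour in one and
the same connected component of the subgraph induced by the vertices at distance `> ℓ`
from `x`, then `w₁ = w₂` or `w₁` and `w₂` are adjacent. -/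
theorem shadowComplete_of_isChordal {V : Type*} [Fintype V] (G : SimpleGraph V)
    (hch : G.IsChordal) (hconn : G.Connected) (x : V) (ℓ : ℕ)
    (w₁ w₂ : V) (hw₁ : G.dist x w₁ = ℓ) (hw₂ : G.dist x w₂ = ℓ)
    (y₁ y₂ : {v : V // ℓ < G.dist x v})
    (hadj₁ : G.Adj w₁ y₁) (hadj₂ : G.Adj w₂ y₂)
    (hreach : (G.induce {v : V | ℓ < G.dist x v}).Reachable y₁ y₂) :
    w₁ = w₂ ∨ G.Adj w₁ w₂ := by
  classical
  by_cases heq : w₁ = w₂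
  · exact Or.inl heq
  by_cases hadj : G.Adj w₁ w₂
  · exact Or.inr hadj
  exfalso
  -- the set of far vertices and near vertices
  set T₁ : Set V := {v : V | ℓ < G.dist x v} with hT₁
  set T₂ : Set V := {v : V | G.dist x v < ℓ} with hT₂
  -- a good walk through the far side
  obtain ⟨W⟩ := hreach
  let f : G.induce T₁ →g G := ⟨Subtype.val, fun {a b} h => h⟩
  have hWsup : ∀ v ∈ (W.map f).support, v ∈ T₁ := by
    intro v hv
    rw [Walk.support_map, List.mem_map] at hv
    obtain ⟨u, _, rfl⟩ := hv
    exact u.property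
  have hexP : ∃ p : G.Walk w₁ w₂, Good G T₁ p := by
    refine ⟨Walk.cons hadj₁ ((W.map f).concat hadj₂.symm), ?_⟩
    intro v hv hv1 hv2
    rw [Walk.support_cons, List.mem_cons] at hv
    rcases hv with rfl | hv
    · exact absurd rfl hv1
    rw [Walk.support_concat, List.mem_append] at hv
    rcases hv with hv | hv
    · exact hWsup v hv
    · simp at hv
      exact absurd hv hv2
  -- a good walk through the near side
  obtain ⟨p₁, hp₁⟩ := hconn.exists_walk_length_eq_dist x w₁
  obtain ⟨p₂, hp₂⟩ := hconn.exists_walk_length_eq_dist x w₂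
  have hexQ : ∃ q : G.Walk w₁ w₂, Good G T₂ q := by
    refine ⟨p₁.reverse.append p₂, ?_⟩
    intro v hv hv1 hv2
    rw [Walk.mem_support_append_iff] at hv
    rcases hv with hv | hv
    · rw [Walk.support_reverse, List.mem_reverse] at hv
      have := dist_lt_of_mem_support hconn p₁ hp₁ hv hv1
      rw [hw₁] at this
      exact this
    · have := dist_lt_of_mem_support hconn p₂ hp₂ hv hv2
      rw [hw₂] at this
      exact this
  obtain ⟨P, hPgood, hPpath, hPmin⟩ := exists_min T₁ hexP
  obtain ⟨Q, hQgood, hQpath, hQmin⟩ := exists_min T₂ hexQ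
  -- supports meet only at endpoints
  have hcap : ∀ v, v ∈ P.support → v ∈ Q.support → v = w₁ ∨ v = w₂ := by
    intro v hvP hvQ
    by_contra h
    push_neg at h
    have h1 := hPgood v hvP h.1 h.2
    have h2 := hQgood v hvQ h.1 h.2
    rw [hT₁] at h1; rw [hT₂] at h2
    simp only [Set.mem_setOf_eq] at h1 h2
    omega
  -- lengths are at least 2
  have hlenP : 2 ≤ P.length := by
    rcases Nat.lt_or_ge P.length 2 with h | h
    · interval_cases h' : P.length
      · exact absurd (Walk.eq_of_length_eq_zero h') heq
      · exact absurd (Walk.adj_of_length_eq_one h') hadj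
    · exact h
  have hlenQ : 2 ≤ Q.length := by
    rcases Nat.lt_or_ge Q.length 2 with h | h
    · interval_cases h' : Q.length
      · exact absurd (Walk.eq_of_length_eq_zero h') heq
      · exact absurd (Walk.adj_of_length_eq_one h') hadj
    · exact h
  -- the cycle
  set C : G.Walk w₁ w₁ := P.append Q.reverse with hC
  have hClen : C.length = P.length + Q.length := by
    rw [hC, Walk.length_append, Walk.length_reverse]
  have hedges : C.IsTrail := by
    constructor
    rw [hC, Walk.edges_append, List.nodup_append]
    refine ⟨hPpath.isTrail.edges_nodup, hQpath.reverse.isTrail.edges_nodup, ?_⟩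
    intro e he1 e' he2 hee
    rw [← hee] at he2
    rw [Walk.edges_reverse, List.mem_reverse] at he2
    induction e using Sym2.ind with
    | _ u v =>
      have huP := P.fst_mem_support_of_mem_edges he1
      have hvP := P.snd_mem_support_of_mem_edges he1
      have huQ := Q.fst_mem_support_of_mem_edges he2
      have hvQ := Q.snd_mem_support_of_mem_edges he2
      have huv : G.Adj u v := P.adj_of_mem_edges he1
      rcases hcap u huP huQ with rfl | rfl <;> rcases hcap v hvP hvQ with rfl | rfl
      · exact huv.ne rfl
      · exact hadj huv
      · exact hadj huv.symm
      · exact huv.ne rfl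
  have hPtail : w₁ ∉ P.support.tail := by
    have := hPpath.support_nodup
    rw [P.support_eq_cons] at this
    exact (List.nodup_cons.mp this).1
  have hQrtail : w₂ ∉ Q.reverse.support.tail := by
    have := hQpath.reverse.support_nodup
    rw [Q.reverse.support_eq_cons] at this
    exact (List.nodup_cons.mp this).1
  have hcyc : C.IsCycle := by
    refine ⟨⟨hedges, ?_⟩, ?_⟩
    · intro h
      have : C.length = 0 := by rw [h]; rfl
      omega
    · have hsupp : C.support.tail = P.support.tail ++ Q.reverse.support.tail := by
        rw [hC, Walk.support_append, P.support_eq_cons, List.cons_append, List.tail_cons]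
        rfl
      rw [hsupp, List.nodup_append]
      refine ⟨List.Nodup.of_cons (P.support_eq_cons ▸ hPpath.support_nodup),
        List.Nodup.of_cons (Q.reverse.support_eq_cons ▸ hQpath.reverse.support_nodup), ?_⟩
      intro u hu1 u' hu2 huu
      rw [← huu] at hu2
      have huP : u ∈ P.support := List.mem_of_mem_tail hu1
      have huQ : u ∈ Q.support := by
        have := List.mem_of_mem_tail hu2
        rwa [Walk.support_reverse, List.mem_reverse] at this
      have hu1' : u ≠ w₁ := fun h => hPtail (h ▸ hu1)
      have hu2' : u ≠ w₂ := fun h => hQrtail (h ▸ hu2)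
      rcases hcap u huP huQ with rfl | rfl
      · exact hu1' rfl
      · exact hu2' rfl
  obtain ⟨a, b, haC, hbC, hab, hnadj⟩ := hch w₁ C hcyc (by omega)
  rw [hC, Walk.mem_support_append_iff] at haC hbC
  have hCsub : C.toSubgraph = P.toSubgraph ⊔ Q.toSubgraph := by
    rw [hC, Walk.toSubgraph_append, Walk.toSubgraph_reverse]
  rw [hC] at hnadj; rw [Walk.toSubgraph_append, Walk.toSubgraph_reverse] at hnadj
  have hQsupp : ∀ v, v ∈ Q.reverse.support ↔ v ∈ Q.support := by
    intro v; rw [Walk.support_reverse, List.mem_reverse]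
  rw [hQsupp] at haC hbC
  by_cases haP : a ∈ P.support <;> by_cases hbP : b ∈ P.support
  · exact hnadj (Subgraph.sup_adj.mpr (Or.inl (chord T₁ hPgood hPmin haP hbP hab)))
  · by_cases haQ : a ∈ Q.support
    · have hbQ : b ∈ Q.support := hbC.resolve_left hbP
      exact hnadj (Subgraph.sup_adj.mpr (Or.inr (chord T₂ hQgood hQmin haQ hbQ hab)))
    · -- a only in P, b only in Q
      have hbQ : b ∈ Q.support := hbC.resolve_left hbP
      have ha1 : a ≠ w₁ := fun h => haQ (h ▸ Q.start_mem_support)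
      have ha2 : a ≠ w₂ := fun h => haQ (h ▸ Q.end_mem_support)
      have hb1 : b ≠ w₁ := fun h => hbP (h ▸ P.start_mem_support)
      have hb2 : b ≠ w₂ := fun h => hbP (h ▸ P.end_mem_support)
      have h1 := hPgood a haP ha1 ha2
      have h2 := hQgood b hbQ hb1 hb2
      rw [hT₁] at h1; rw [hT₂] at h2
      simp only [Set.mem_setOf_eq] at h1 h2
      have htri : G.dist x a ≤ G.dist x b + G.dist b a := hconn.dist_triangle
      rw [SimpleGraph.dist_eq_one_iff_adj.mpr hab.symm] at htri
      omega
  · by_cases hbQ : b ∈ Q.support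
    · have haQ : a ∈ Q.support := haC.resolve_left haP
      exact hnadj (Subgraph.sup_adj.mpr (Or.inr (chord T₂ hQgood hQmin haQ hbQ hab)))
    · -- b only in P, a only in Q
      have haQ : a ∈ Q.support := haC.resolve_left haP
      have hb1 : b ≠ w₁ := fun h => hbQ (h ▸ Q.start_mem_support)
      have hb2 : b ≠ w₂ := fun h => hbQ (h ▸ Q.end_mem_support)
      have ha1 : a ≠ w₁ := fun h => haP (h ▸ P.start_mem_support)
      have ha2 : a ≠ w₂ := fun h => haP (h ▸ P.end_mem_support)
      have h1 := hPgood b hbP hb1 hb2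
      have h2 := hQgood a haQ ha1 ha2
      rw [hT₁] at h1; rw [hT₂] at h2
      simp only [Set.mem_setOf_eq] at h1 h2
      have htri : G.dist x b ≤ G.dist x a + G.dist a b := hconn.dist_triangle
      rw [SimpleGraph.dist_eq_one_iff_adj.mpr hab] at htri
      omega
  · have haQ : a ∈ Q.support := haC.resolve_left haP
    have hbQ : b ∈ Q.support := hbC.resolve_left hbP
    exact hnadj (Subgraph.sup_adj.mpr (Or.inr (chord T₂ hQgood hQmin haQ hbQ hab)))
end

section
/- Let G be a finite connected chordal graph with clique number t ≥ 2, let x be any vertex of G, and let ℓ be a non-negative integer. Then the subgraph G_ℓ of G induced by the set N^ℓ(x) of vertices at distance exactly ℓ from x is a chordal graph, and its clique number is strictly smaller than t. -/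
open SimpleGraph

namespace ChordalAux

variable {V : Type*} {G : SimpleGraph V}

open SimpleGraph.Walk

/-- A `take` operation on walks. -/
def wtake {u v : V} : (p : G.Walk u v) → (n : ℕ) → G.Walk u (p.getVert n)
  | p, 0 => Walk.nil.copy rfl (p.getVert_zero).symm
  | .nil, _+1 => .nil
  | .cons h q, (n+1) => Walk.cons h (wtake q n)

@[simp] lemma wtake_zero {u v : V} (p : G.Walk u v) :
    wtake p 0 = Walk.nil.copy rfl (p.getVert_zero).symm := by cases p <;> rfl

@[simp] lemma wtake_nil_succ {u : V} (n : ℕ) :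
    wtake (Walk.nil : G.Walk u u) (n+1) = Walk.nil := rfl

@[simp] lemma wtake_cons_succ {u v w : V} (h : G.Adj u v) (q : G.Walk v w) (n : ℕ) :
    wtake (Walk.cons h q) (n+1) = Walk.cons h (wtake q n) := rfl

lemma length_wtake {u v : V} (p : G.Walk u v) {n : ℕ} (hn : n ≤ p.length) :
    (wtake p n).length = n := by
  induction p generalizing n with
  | nil =>
    simp only [Walk.length_nil, Nat.le_zero] at hn
    subst hn; simp
  | cons h q ih =>
    cases n with
    | zero => simp
    | succ n =>
      simp only [wtake_cons_succ, Walk.length_cons]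
      exact congrArg (· + 1) (ih (by simpa using hn))

lemma support_wtake_subset {u v : V} (p : G.Walk u v) (n : ℕ) :
    ∀ y ∈ (wtake p n).support, y ∈ p.support := by
  induction p generalizing n with
  | nil => cases n <;> simp
  | cons h q ih =>
    cases n with
    | zero => simp
    | succ n =>
      intro y hy
      change y ∈ (Walk.cons h (wtake q n)).support at hy
      rw [Walk.support_cons, List.mem_cons] at hy
      rcases hy with rfl | hy
      · simp
      · simp only [Walk.support_cons, List.mem_cons]
        exact Or.inr (ih n y hy)

lemma length_wdrop {u v : V} (p : G.Walk u v) (n : ℕ) :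
    (p.drop n).length = p.length - n := by
  induction p generalizing n with
  | nil => cases n <;> simp [Walk.drop]
  | cons h q ih =>
    cases n with
    | zero => simp [Walk.drop]
    | succ n => simpa [Walk.drop] using ih n

lemma support_wdrop_subset {u v : V} (p : G.Walk u v) (n : ℕ) :
    ∀ y ∈ (p.drop n).support, y ∈ p.support := by
  induction p generalizing n with
  | nil => cases n <;> simp [Walk.drop, Walk.getVert]
  | cons h q ih =>
    cases n with
    | zero => simp [Walk.drop]
    | succ n =>
      intro y hy
      simp only [Walk.drop, Walk.support_copy] at hy
      simp only [Walk.support_cons, List.mem_cons]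
      exact Or.inr (ih n y hy)

lemma exists_minimal_walk {w w' : V} {P : V → Prop}
    (h : ∃ p : G.Walk w w', ∀ y ∈ p.support, P y) :
    ∃ p : G.Walk w w', (∀ y ∈ p.support, P y) ∧ p.IsPath ∧
      ∀ q : G.Walk w w', (∀ y ∈ q.support, P y) → p.length ≤ q.length := by
  classical
  let S : Set ℕ := {n | ∃ q : G.Walk w w', (∀ y ∈ q.support, P y) ∧ q.length = n}
  have hS : S.Nonempty := ⟨h.choose.length, h.choose, h.choose_spec, rfl⟩
  obtain ⟨q, hq, hqlen⟩ := Nat.sInf_mem hS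
  refine ⟨q.bypass, fun y hy => hq y (q.support_bypass_subset hy), q.bypass_isPath, ?_⟩
  intro r hr
  have h1 : q.bypass.length ≤ q.length := q.length_bypass_le
  have h2 : sInf S ≤ r.length := Nat.sInf_le ⟨r, hr, rfl⟩
  omega

lemma minimal_induced_aux {w w' : V} {P : V → Prop} {p : G.Walk w w'}
    (hp : ∀ y ∈ p.support, P y)
    (hmin : ∀ q : G.Walk w w', (∀ y ∈ q.support, P y) → p.length ≤ q.length)
    {i j : ℕ} (hij : i < j) (hj : j ≤ p.length)
    (hadj : G.Adj (p.getVert i) (p.getVert j)) :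
    j = i + 1 := by
  by_contra hne
  set q : G.Walk w w' := (wtake p i).append (Walk.cons hadj (p.drop j)) with hqdef
  have hqsup : ∀ y ∈ q.support, P y := by
    intro y hy
    rw [hqdef, Walk.mem_support_append_iff] at hy
    rcases hy with hy | hy
    · exact hp y (support_wtake_subset p i y hy)
    · rw [Walk.support_cons, List.mem_cons] at hy
      rcases hy with rfl | hy
      · exact hp _ (Walk.mem_support_iff_exists_getVert.mpr ⟨i, rfl, by omega⟩)
      · exact hp y (support_wdrop_subset p j y hy)
  have hql : q.length = i + 1 + (p.length - j) := by
    rw [hqdef, Walk.length_append, Walk.length_cons, length_wdrop,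
      length_wtake p (by omega)]
    omega
  have := hmin q hqsup
  omega

lemma minimal_walk_induced {w w' : V} {P : V → Prop} {p : G.Walk w w'}
    (hp : ∀ y ∈ p.support, P y)
    (hmin : ∀ q : G.Walk w w', (∀ y ∈ q.support, P y) → p.length ≤ q.length)
    {a b : V} (ha : a ∈ p.support) (hb : b ∈ p.support) (hab : G.Adj a b) :
    p.toSubgraph.Adj a b := by
  obtain ⟨i, hgi, hi⟩ := Walk.mem_support_iff_exists_getVert.mp ha
  obtain ⟨j, hgj, hj⟩ := Walk.mem_support_iff_exists_getVert.mp hb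
  have hne : i ≠ j := by
    rintro rfl; rw [hgi] at hgj; exact hab.ne (hgj ▸ rfl)
  rcases hne.lt_or_gt with hij | hij
  · have h1 := minimal_induced_aux hp hmin hij hj (by rw [hgi, hgj]; exact hab)
    have := p.toSubgraph_adj_getVert (i := i) (by omega)
    rw [hgi, ← h1, hgj] at this
    exact this
  · have h1 := minimal_induced_aux hp hmin hij hi (by rw [hgi, hgj]; exact hab.symm)
    have := p.toSubgraph_adj_getVert (i := j) (by omega)
    rw [hgj, ← h1, hgi] at this
    exact this.symm

lemma dist_getVert_eq (hconn : G.Connected) {x v : V} {p : G.Walk x v}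
    (hp : p.length = G.dist x v) {i : ℕ} (hi : i ≤ p.length) :
    G.dist x (p.getVert i) = i := by
  have h1 : G.dist x (p.getVert i) ≤ i := by
    have := SimpleGraph.dist_le (wtake p i)
    rwa [length_wtake p hi] at this
  have h2 : G.dist (p.getVert i) v ≤ p.length - i := by
    have := SimpleGraph.dist_le (p.drop i)
    rwa [length_wdrop] at this
  have h3 := hconn.dist_triangle (u := x) (v := p.getVert i) (w := v)
  omega

lemma exists_down (hconn : G.Connected) {x v : V} {n : ℕ} (hv : G.dist x v = n + 1) :
    ∃ w, G.Adj w v ∧ G.dist x w = n := by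
  obtain ⟨p, hp⟩ := hconn.exists_walk_length_eq_dist x v
  have hlen : p.length = n + 1 := by rw [hp, hv]
  have hadj := p.adj_getVert_succ (i := n) (by omega)
  rw [show n + 1 = p.length by omega, p.getVert_length] at hadj
  exact ⟨p.getVert n, hadj, dist_getVert_eq hconn hp (by omega)⟩

lemma adj_dist_le (hconn : G.Connected) {x a b : V} (hab : G.Adj a b) :
    G.dist x a ≤ G.dist x b + 1 := by
  have h1 : G.dist b a = 1 := SimpleGraph.dist_eq_one_iff_adj.mpr hab.symm
  have := hconn.dist_triangle (u := x) (v := b) (w := a)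
  omega

lemma two_le_length {w w' : V} (hne : w ≠ w') (hnadj : ¬ G.Adj w w')
    (p : G.Walk w w') : 2 ≤ p.length := by
  rcases Nat.lt_or_ge p.length 2 with h | h
  · interval_cases h' : p.length
    · exact absurd (Walk.eq_of_length_eq_zero h') hne
    · exact absurd (Walk.adj_of_length_eq_one h') hnadj
  · exact h

lemma level_adj_of_upper_walk {x : V} (hconn : G.Connected) (hch : G.IsChordal)
    {m : ℕ} {w w' : V} (hw : G.dist x w = m) (hw' : G.dist x w' = m) (hne : w ≠ w')
    (R₀ : G.Walk w w') (hR₀ : ∀ y ∈ R₀.support, y = w ∨ y = w' ∨ m + 1 ≤ G.dist x y) :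
    G.Adj w w' := by
  by_contra hnadj
  have hm : 1 ≤ m := by
    by_contra h
    have hm0 : m = 0 := by omega
    subst hm0
    have e1 : x = w := hconn.dist_eq_zero_iff.mp hw
    have e2 : x = w' := hconn.dist_eq_zero_iff.mp hw'
    exact hne (e1 ▸ e2)
  -- minimal upper walk
  obtain ⟨R, hRprop, hRpath, hRmin⟩ := exists_minimal_walk ⟨R₀, hR₀⟩
  -- lower walk from w' to w through shortest paths to x
  obtain ⟨p1, hp1⟩ := hconn.exists_walk_length_eq_dist x w'
  obtain ⟨p2, hp2⟩ := hconn.exists_walk_length_eq_dist x w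
  have hshort : ∀ (z : V) (hz : G.dist x z = m) (p : G.Walk x z), p.length = G.dist x z →
      ∀ y ∈ p.support, y = z ∨ G.dist x y ≤ m - 1 := by
    intro z hz p hp y hy
    obtain ⟨i, hgi, hi⟩ := Walk.mem_support_iff_exists_getVert.mp hy
    have hdy : G.dist x y = i := by rw [← hgi]; exact dist_getVert_eq hconn hp hi
    rcases Nat.eq_or_lt_of_le hi with he | hlt
    · left; rw [← hgi, he, p.getVert_length]
    · right; omega
  have hR'ex : ∃ p : G.Walk w' w, ∀ y ∈ p.support,
      y = w ∨ y = w' ∨ G.dist x y ≤ m - 1 := by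
    refine ⟨p1.reverse.append p2, ?_⟩
    intro y hy
    rw [Walk.mem_support_append_iff, Walk.support_reverse, List.mem_reverse] at hy
    rcases hy with hy | hy
    · rcases hshort w' hw' p1 hp1 y hy with rfl | h
      · exact Or.inr (Or.inl rfl)
      · exact Or.inr (Or.inr h)
    · rcases hshort w hw p2 hp2 y hy with rfl | h
      · exact Or.inl rfl
      · exact Or.inr (Or.inr h)
  obtain ⟨R', hR'prop, hR'path, hR'min⟩ := exists_minimal_walk hR'ex
  have hR2 : 2 ≤ R.length := two_le_length hne hnadj R
  have hR'2 : 2 ≤ R'.length := two_le_length (Ne.symm hne) (fun h => hnadj h.symm) R'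
  set C : G.Walk w w := R.append R' with hCdef
  have hClen : 4 ≤ C.length := by rw [hCdef, Walk.length_append]; omega
  -- level separation facts
  have hsep : ∀ y : V, y ∈ R.support → y ∈ R'.support → y = w ∨ y = w' := by
    intro y h1 h2
    rcases hRprop y h1 with rfl | rfl | hd1
    · exact Or.inl rfl
    · exact Or.inr rfl
    · rcases hR'prop y h2 with rfl | rfl | hd2
      · exact Or.inl rfl
      · exact Or.inr rfl
      · omega
  have hcyc : C.IsCycle := by
    rw [Walk.isCycle_def]
    refine ⟨?_, ?_, ?_⟩
    · rw [Walk.isTrail_def, hCdef, Walk.edges_append]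
      refine List.Nodup.append hRpath.isTrail.edges_nodup hR'path.isTrail.edges_nodup ?_
      intro e he1 he2
      induction e with
      | h c d =>
        have hc1 : c ∈ R.support := R.fst_mem_support_of_mem_edges he1
        have hd1 : d ∈ R.support := R.snd_mem_support_of_mem_edges he1
        have hc2 : c ∈ R'.support := R'.fst_mem_support_of_mem_edges he2
        have hd2 : d ∈ R'.support := R'.snd_mem_support_of_mem_edges he2
        have hadj : G.Adj c d := R.adj_of_mem_edges he1
        rcases hsep c hc1 hc2 with rfl | rfl <;> rcases hsep d hd1 hd2 with rfl | rfl
        · exact hadj.ne rfl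
        · exact hnadj hadj
        · exact hnadj hadj.symm
        · exact hadj.ne rfl
    · intro h
      have : C.length = 0 := by rw [h]; rfl
      omega
    · rw [hCdef, Walk.tail_support_append]
      have hwR : w ∉ R.support.tail := by
        have := hRpath.support_nodup
        rw [R.support_eq_cons] at this
        exact (List.nodup_cons.mp this).1
      have hw'R' : w' ∉ R'.support.tail := by
        have := hR'path.support_nodup
        rw [R'.support_eq_cons] at this
        exact (List.nodup_cons.mp this).1
      refine List.Nodup.append (hRpath.support_nodup.tail) (hR'path.support_nodup.tail) ?_
      intro y hy1 hy2
      have hy1' : y ∈ R.support := by rw [R.support_eq_cons]; exact List.mem_cons_of_mem _ hy1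
      have hy2' : y ∈ R'.support := by rw [R'.support_eq_cons]; exact List.mem_cons_of_mem _ hy2
      rcases hsep y hy1' hy2' with rfl | rfl
      · exact hwR hy1
      · exact hw'R' hy2
  obtain ⟨a, b, haC, hbC, hab, hnC⟩ := hch w C hcyc hClen
  have hCsub : C.toSubgraph = R.toSubgraph ⊔ R'.toSubgraph := Walk.toSubgraph_append R R'
  have hnR : ¬ R.toSubgraph.Adj a b := fun h => hnC (by rw [hCsub]; exact Or.inl h)
  have hnR' : ¬ R'.toSubgraph.Adj a b := fun h => hnC (by rw [hCsub]; exact Or.inr h)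
  rw [hCdef, Walk.mem_support_append_iff] at haC hbC
  have keyR : a ∈ R.support → b ∈ R.support → False := fun h1 h2 =>
    hnR (minimal_walk_induced hRprop hRmin h1 h2 hab)
  have keyR' : a ∈ R'.support → b ∈ R'.support → False := fun h1 h2 =>
    hnR' (minimal_walk_induced hR'prop hR'min h1 h2 hab)
  have mixed : ∀ a' b' : V, G.Adj a' b' → a' ∈ R.support → b' ∈ R'.support →
      (a' ∈ R'.support ∨ b' ∈ R.support) ∨ False := by
    intro a' b' hab' h1 h2
    rcases hRprop a' h1 with rfl | rfl | hd1
    · exact Or.inl (Or.inl R'.end_mem_support)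
    · exact Or.inl (Or.inl R'.start_mem_support)
    · rcases hR'prop b' h2 with rfl | rfl | hd2
      · exact Or.inl (Or.inr R.start_mem_support)
      · exact Or.inl (Or.inr R.end_mem_support)
      · exact Or.inr (by have := adj_dist_le hconn (x := x) hab'; omega)
  rcases haC with haR | haR' <;> rcases hbC with hbR | hbR'
  · exact keyR haR hbR
  · rcases mixed a b hab haR hbR' with (h | h) | h
    · exact keyR' h hbR'
    · exact keyR haR h
    · exact h
  · rcases mixed b a hab.symm hbR haR' with (h | h) | h
    · exact keyR' haR' h
    · exact keyR h hbR
    · exact h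
  · exact keyR' haR' hbR'

lemma down_adj {x : V} (hconn : G.Connected) (hch : G.IsChordal)
    {n : ℕ} {u v w w' : V}
    (hu : G.dist x u = n + 1) (hv : G.dist x v = n + 1)
    (huv : u = v ∨ G.Adj u v)
    (hw : G.dist x w = n) (hw' : G.dist x w' = n)
    (hwu : G.Adj w u) (hw'v : G.Adj w' v) : w = w' ∨ G.Adj w w' := by
  by_cases hne : w = w'
  · exact Or.inl hne
  right
  rcases huv with rfl | huv
  · refine level_adj_of_upper_walk hconn hch hw hw' hne
      (Walk.cons hwu (Walk.cons hw'v.symm Walk.nil)) ?_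
    intro y hy
    simp only [Walk.support_cons, Walk.support_nil, List.mem_cons,
      List.mem_singleton, List.not_mem_nil, or_false] at hy
    rcases hy with rfl | rfl | rfl
    · exact Or.inl rfl
    · exact Or.inr (Or.inr (by omega))
    · exact Or.inr (Or.inl rfl)
  · refine level_adj_of_upper_walk hconn hch hw hw' hne
      (Walk.cons hwu (Walk.cons huv (Walk.cons hw'v.symm Walk.nil))) ?_
    intro y hy
    simp only [Walk.support_cons, Walk.support_nil, List.mem_cons,
      List.mem_singleton, List.not_mem_nil, or_false] at hy
    rcases hy with rfl | rfl | rfl | rfl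
    · exact Or.inl rfl
    · exact Or.inr (Or.inr (by omega))
    · exact Or.inr (Or.inr (by omega))
    · exact Or.inr (Or.inl rfl)

lemma clique_common_nbr {x : V} (hconn : G.Connected) (hch : G.IsChordal) {n : ℕ} :
    ∀ K : Finset V, K.Nonempty → G.IsClique (K : Set V) →
      (∀ v ∈ K, G.dist x v = n + 1) →
      ∃ w, G.dist x w = n ∧ ∀ v ∈ K, G.Adj w v := by
  classical
  intro K
  induction K using Finset.induction_on with
  | empty => intro h; exact absurd h (by simp)
  | @insert u K₀ hu ih =>
    intro _ hclique hlev
    have hadj_uv : ∀ v' ∈ K₀, G.Adj u v' := by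
      intro v' hv'
      exact hclique (by simp) (by simp [hv']) (by rintro rfl; exact hu hv')
    rcases K₀.eq_empty_or_nonempty with rfl | hK₀ne
    · obtain ⟨w, hwadj, hwd⟩ := exists_down hconn (hlev u (Finset.mem_insert_self u ∅))
      refine ⟨w, hwd, ?_⟩
      intro v hv
      rcases Finset.mem_insert.mp hv with rfl | hv0
      · exact hwadj
      · exact absurd hv0 (Finset.notMem_empty v)
    · have hcl₀ : G.IsClique (K₀ : Set V) :=
        hclique.subset (Finset.coe_subset.mpr (Finset.subset_insert u K₀))
      obtain ⟨w, hwd, hwadj⟩ :=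
        ih hK₀ne hcl₀ (fun v hv => hlev v (Finset.mem_insert_of_mem hv))
      by_cases hwu : G.Adj w u
      · refine ⟨w, hwd, fun v hv => ?_⟩
        rcases Finset.mem_insert.mp hv with rfl | hv0
        · exact hwu
        · exact hwadj v hv0
      · obtain ⟨v, hv⟩ := hK₀ne
        obtain ⟨w₁, hw₁u, hw₁d⟩ := exists_down hconn (hlev u (Finset.mem_insert_self u K₀))
        have hww₁ : w₁ = w ∨ G.Adj w₁ w :=
          down_adj hconn hch (hlev u (Finset.mem_insert_self u K₀))
            (hlev v (Finset.mem_insert_of_mem hv)) (Or.inr (hadj_uv v hv))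
            hw₁d hwd hw₁u (hwadj v hv)
        rcases hww₁ with rfl | hww₁
        · exact absurd hw₁u hwu
        · refine ⟨w₁, hw₁d, ?_⟩
          intro v' hv'
          rcases Finset.mem_insert.mp hv' with rfl | hv'0
          · exact hw₁u
          · by_contra hnadj
            have hd_u := hlev u (Finset.mem_insert_self u K₀)
            have hd_v' := hlev v' (Finset.mem_insert_of_mem hv'0)
            have ne1 : w₁ ≠ w := hww₁.ne
            have ne2 : w₁ ≠ v' := by intro h; rw [h] at hw₁d; omega
            have ne3 : w₁ ≠ u := by intro h; rw [h] at hw₁d; omega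
            have ne4 : w ≠ v' := by intro h; rw [h] at hwd; omega
            have ne5 : w ≠ u := by intro h; rw [h] at hwd; omega
            have ne6 : v' ≠ u := fun h => hu (h ▸ hv'0)
            have h1 : G.Adj u w₁ := hw₁u.symm
            have h2 : G.Adj w₁ w := hww₁
            have h3 : G.Adj w v' := hwadj v' hv'0
            have h4 : G.Adj v' u := (hadj_uv v' hv'0).symm
            set c : G.Walk u u :=
              Walk.cons h1 (Walk.cons h2 (Walk.cons h3 (Walk.cons h4 Walk.nil))) with hcdef
            have hcyc : c.IsCycle := by
              rw [hcdef, Walk.cons_isCycle_iff]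
              constructor
              · rw [Walk.isPath_def]
                simp [ne1, ne2, ne3, ne4, ne5, ne6, ne1.symm, ne2.symm, ne3.symm,
                  ne4.symm, ne5.symm, ne6.symm]
              · simp [Sym2.eq_iff, ne1, ne2, ne3, ne4, ne5, ne6, ne1.symm, ne2.symm,
                  ne3.symm, ne4.symm, ne5.symm, ne6.symm]
            have hclen : c.length = 4 := rfl
            obtain ⟨a, b, ha, hb, hab, hnC⟩ := hch u c hcyc (by omega)
            have hmem : ∀ z, z ∈ c.support → z = u ∨ z = w₁ ∨ z = w ∨ z = v' := by
              intro z hz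
              rw [hcdef] at hz
              simp only [Walk.support_cons, Walk.support_nil, List.mem_cons,
                List.not_mem_nil, or_false] at hz
              tauto
            rcases hmem a ha with rfl | rfl | rfl | rfl <;>
              rcases hmem b hb with rfl | rfl | rfl | rfl <;>
              first
                | exact hab.ne rfl
                | exact hwu hab
                | exact hwu hab.symm
                | exact hnadj hab
                | exact hnadj hab.symm
                | exact hnC (by rw [hcdef]; simp [Walk.toSubgraph])

lemma isChordal_induce (hch : G.IsChordal) (s : Set V) : (G.induce s).IsChordal := by
  intro v c hc hlen
  let f : G.induce s →g G := ⟨Subtype.val, fun {a b} h => h⟩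
  have hinj : Function.Injective f := Subtype.val_injective
  have hc' : (c.map f).IsCycle := hc.map hinj
  obtain ⟨a, b, ha, hb, hab, hnadj⟩ := hch _ (c.map f) hc' (by rwa [Walk.length_map])
  rw [Walk.support_map, List.mem_map] at ha hb
  obtain ⟨a', ha', rfl⟩ := ha
  obtain ⟨b', hb', rfl⟩ := hb
  refine ⟨a', b', ha', hb', hab, ?_⟩
  intro h
  apply hnadj
  rw [Walk.toSubgraph_map]
  exact ⟨a', b', h, rfl, rfl⟩

end ChordalAux

open ChordalAux in
/-- For a finite connected chordal graph `G` with clique number `t ≥ 2`,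
any vertex `x` and any `ℓ ≥ 0`, the subgraph induced by the `ℓ`-th level
`N^ℓ(x) = {v | d_G(x,v) = ℓ}` is chordal and has clique number strictly smaller than `t`. -/
theorem level_induce_isChordal_and_cliqueFree {V : Type*} [Fintype V] (G : SimpleGraph V)
    (t : ℕ) (ht : 2 ≤ t) (hch : G.IsChordal) (hcn : G.cliqueNum = t)
    (hconn : G.Connected) (x : V) (ℓ : ℕ) :
    (G.induce {v : V | G.dist x v = ℓ}).IsChordal ∧
      (G.induce {v : V | G.dist x v = ℓ}).CliqueFree t := by
  classical
  refine ⟨isChordal_induce hch _, ?_⟩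
  intro K hK
  have hlev : ∀ a : {v : V | G.dist x v = ℓ}, G.dist x (a : V) = ℓ := fun a => a.2
  set K' : Finset V := K.image Subtype.val with hK'def
  have hKcl : G.IsClique (K' : Set V) := by
    intro a ha b hb hne
    rw [hK'def] at ha hb
    simp only [Finset.coe_image, Set.mem_image, Finset.mem_coe] at ha hb
    obtain ⟨a', ha', rfl⟩ := ha
    obtain ⟨b', hb', rfl⟩ := hb
    have hne' : a' ≠ b' := fun h => hne (by rw [h])
    exact hK.1 (Finset.mem_coe.mpr ha') (Finset.mem_coe.mpr hb') hne'
  have hK'card : K'.card = t := by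
    rw [hK'def, Finset.card_image_of_injective K Subtype.val_injective, hK.2]
  have hK'lev : ∀ v ∈ K', G.dist x v = ℓ := by
    intro v hv
    rw [hK'def] at hv
    simp only [Finset.mem_image] at hv
    obtain ⟨a, _, rfl⟩ := hv
    exact hlev a
  cases ℓ with
  | zero =>
    obtain ⟨a, ha, b, hb, hab⟩ := Finset.one_lt_card.mp (by omega : 1 < K'.card)
    have ha' : x = a := hconn.dist_eq_zero_iff.mp (hK'lev a ha)
    have hb' : x = b := hconn.dist_eq_zero_iff.mp (hK'lev b hb)
    exact hab (ha' ▸ hb')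
  | succ n =>
    have hK'ne : K'.Nonempty := Finset.card_pos.mp (by omega)
    obtain ⟨w, hwd, hwadj⟩ := clique_common_nbr hconn hch K' hK'ne hKcl hK'lev
    have hwK' : w ∉ K' := by
      intro h
      have := hK'lev w h
      omega
    have hclique2 : G.IsClique ((insert w K' : Finset V) : Set V) := by
      rw [Finset.coe_insert]
      exact hKcl.insert (fun b hb _ => hwadj b hb)
    have hcard2 : (insert w K').card = t + 1 := by
      rw [Finset.card_insert_of_notMem hwK', hK'card]
    have hle : (insert w K').card ≤ G.cliqueNum :=
      SimpleGraph.IsClique.card_le_cliqueNum (tc := hclique2)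
    rw [hcard2, hcn] at hle
    omega
end

section
/- Let G be a finite connected chordal graph, let x be a vertex of G, and let u, v be vertices with d_G(u,x) = d_G(v,x) = ℓ for some positive integer ℓ. If there is a vertex y with d_G(y,x) > ℓ such that u and v are both ancestors of y with respect to x, then u = v or u and v are adjacent in G. -/
open SimpleGraph

/-- `w` is an *ancestor* of `u` with respect to `x` if `w` lies on a strictly earlier
distance-level from `x` than `u` does, and there is a path from `u` to `w` whose length is
the difference of the two levels. -/
def SimpleGraph.IsAncestor {V : Type*} (G : SimpleGraph V) (x w u : V) : Prop :=
  G.dist x w < G.dist x u ∧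
    ∃ q : G.Walk u w, q.IsPath ∧ q.length = G.dist x u - G.dist x w

namespace ChordalAux

variable {V : Type*} [DecidableEq V] {G : SimpleGraph V}

lemma edges_of_length_one : ∀ {a b : V} {p : G.Walk a b}, p.length = 1 → p.edges = [s(a, b)]
  | _, _, Walk.nil, h => by simp at h
  | _, _, Walk.cons h' Walk.nil, _ => by simp
  | _, _, Walk.cons h' (Walk.cons h'' q), h => by
      simp only [Walk.length_cons] at h; omega

lemma adj_of_length_one {a b : V} {p : G.Walk a b} (h : p.length = 1) : G.Adj a b := by
  have := edges_of_length_one h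
  have : s(a, b) ∈ p.edges := by rw [this]; simp
  exact (G.mem_edgeSet).mp (p.edges_subset_edgeSet this)

lemma dist_le_succ_of_adj (hconn : G.Connected) {a b x : V} (h : G.Adj a b) :
    G.dist a x ≤ G.dist b x + 1 := by
  obtain ⟨p, hp⟩ := hconn.exists_walk_length_eq_dist b x
  calc G.dist a x ≤ (Walk.cons h p).length := SimpleGraph.dist_le _
    _ = G.dist b x + 1 := by simp [hp, Nat.add_comm]

lemma dist_lt_of_mem_support_geodesic {u x w : V} (p : G.Walk u x)
    (hp : p.length = G.dist u x) (hw : w ∈ p.support) (hne : w ≠ u) :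
    G.dist w x < G.dist u x := by
  have hsplit := congrArg Walk.length (p.take_spec hw)
  rw [Walk.length_append] at hsplit
  have h1 : 1 ≤ (p.takeUntil w hw).length := by
    rcases Nat.eq_zero_or_pos (p.takeUntil w hw).length with h0 | h
    · exact absurd (Walk.eq_of_length_eq_zero h0).symm hne
    · exact h
  have h2 : G.dist w x ≤ (p.dropUntil w hw).length := SimpleGraph.dist_le _
  omega

lemma exists_good_walk (hconn : G.Connected) (x : V) {u v : V}
    (huv : G.dist u x = G.dist v x) :
    ∃ W : G.Walk u v, ∀ w ∈ W.support, w = u ∨ w = v ∨ G.dist w x < G.dist u x := by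
  obtain ⟨pu, hpu⟩ := hconn.exists_walk_length_eq_dist u x
  obtain ⟨pv, hpv⟩ := hconn.exists_walk_length_eq_dist v x
  refine ⟨pu.append pv.reverse, ?_⟩
  intro w hw
  rw [Walk.mem_support_append_iff] at hw
  rcases hw with hw | hw
  · by_cases h : w = u
    · exact Or.inl h
    · exact Or.inr (Or.inr (dist_lt_of_mem_support_geodesic pu hpu hw h))
  · rw [Walk.support_reverse, List.mem_reverse] at hw
    by_cases h : w = v
    · exact Or.inr (Or.inl h)
    · right; right; rw [huv]; exact dist_lt_of_mem_support_geodesic pv hpv hw h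

lemma exists_min_path (Q : V → Prop) {u v : V} (W0 : G.Walk u v)
    (h0 : ∀ w ∈ W0.support, Q w) :
    ∃ R : G.Walk u v, R.IsPath ∧ (∀ w ∈ R.support, Q w) ∧
      ∀ W : G.Walk u v, (∀ w ∈ W.support, Q w) → R.length ≤ W.length := by
  classical
  have hex : ∃ n, ∃ W : G.Walk u v, (∀ w ∈ W.support, Q w) ∧ W.length = n :=
    ⟨W0.length, W0, h0, rfl⟩
  obtain ⟨W, hWQ, hWlen⟩ := Nat.find_spec hex
  refine ⟨W.bypass, W.bypass_isPath, fun w hw => hWQ w (W.support_bypass_subset hw), ?_⟩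
  intro W' hW'
  calc W.bypass.length ≤ W.length := Walk.length_bypass_le W
    _ = Nat.find hex := hWlen
    _ ≤ W'.length := Nat.find_min' hex ⟨W', hW', rfl⟩

lemma shortcut {u v : V} (Q : V → Prop) (R : G.Walk u v)
    (hQ : ∀ w ∈ R.support, Q w)
    (hmin : ∀ W : G.Walk u v, (∀ w ∈ W.support, Q w) → R.length ≤ W.length)
    {a b : V} (ha : a ∈ R.support) (hb : b ∈ R.support) (hab : G.Adj a b) :
    s(a, b) ∈ R.edges := by
  by_contra hne
  by_cases hbd : b ∈ (R.dropUntil a ha).support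
  · set t := R.takeUntil a ha with ht
    set d := R.dropUntil a ha with hd
    have hsplit : t.length + d.length = R.length := by
      have := congrArg Walk.length (R.take_spec ha); rwa [Walk.length_append] at this
    have hsplit2 : (d.takeUntil b hbd).length + (d.dropUntil b hbd).length = d.length := by
      have := congrArg Walk.length (d.take_spec hbd); rwa [Walk.length_append] at this
    set W' := t.append (Walk.cons hab (d.dropUntil b hbd)) with hW'
    have hWgood : ∀ w ∈ W'.support, Q w := by
      intro w hw
      rw [hW', Walk.mem_support_append_iff] at hw
      rcases hw with hw | hw
      · exact hQ w (R.support_takeUntil_subset ha hw)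
      · rw [Walk.support_cons, List.mem_cons] at hw
        rcases hw with rfl | hw
        · exact hQ w ha
        · exact hQ w (R.support_dropUntil_subset ha (d.support_dropUntil_subset hbd hw))
    have hlen := hmin W' hWgood
    have hW'len : W'.length = t.length + ((d.dropUntil b hbd).length + 1) := by
      rw [hW', Walk.length_append, Walk.length_cons]
    rw [hW'len] at hlen
    have hk : (d.takeUntil b hbd).length ≤ 1 := by omega
    rcases Nat.lt_or_ge (d.takeUntil b hbd).length 1 with h1 | h1
    · exact hab.ne (Walk.eq_of_length_eq_zero (p := d.takeUntil b hbd) (by omega))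
    · have hlen1 : (d.takeUntil b hbd).length = 1 := le_antisymm hk h1
      have he := edges_of_length_one (p := d.takeUntil b hbd) hlen1
      apply hne
      apply R.edges_dropUntil_subset ha
      apply d.edges_takeUntil_subset hbd
      rw [he]; simp
  · have hbt : b ∈ (R.takeUntil a ha).support := by
      have hmem : b ∈ ((R.takeUntil a ha).append (R.dropUntil a ha)).support := by
        rw [R.take_spec ha]; exact hb
      rw [Walk.mem_support_append_iff] at hmem
      tauto
    set t := R.takeUntil a ha with ht
    set d := R.dropUntil a ha with hd
    have hsplit : t.length + d.length = R.length := by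
      have := congrArg Walk.length (R.take_spec ha); rwa [Walk.length_append] at this
    have hsplit2 : (t.takeUntil b hbt).length + (t.dropUntil b hbt).length = t.length := by
      have := congrArg Walk.length (t.take_spec hbt); rwa [Walk.length_append] at this
    set W' := (t.takeUntil b hbt).append (Walk.cons hab.symm d) with hW'
    have hWgood : ∀ w ∈ W'.support, Q w := by
      intro w hw
      rw [hW', Walk.mem_support_append_iff] at hw
      rcases hw with hw | hw
      · exact hQ w (R.support_takeUntil_subset ha (t.support_takeUntil_subset hbt hw))
      · rw [Walk.support_cons, List.mem_cons] at hw
        rcases hw with rfl | hw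
        · exact hQ w hb
        · exact hQ w (R.support_dropUntil_subset ha hw)
    have hlen := hmin W' hWgood
    have hW'len : W'.length = (t.takeUntil b hbt).length + (d.length + 1) := by
      rw [hW', Walk.length_append, Walk.length_cons]
    rw [hW'len] at hlen
    have hk : (t.dropUntil b hbt).length ≤ 1 := by omega
    rcases Nat.lt_or_ge (t.dropUntil b hbt).length 1 with h1 | h1
    · exact hab.ne (Walk.eq_of_length_eq_zero (p := t.dropUntil b hbt) (by omega)).symm
    · have hlen1 : (t.dropUntil b hbt).length = 1 := le_antisymm hk h1
      have he := edges_of_length_one (p := t.dropUntil b hbt) hlen1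
      apply hne
      rw [Sym2.eq_swap]
      apply R.edges_takeUntil_subset ha
      apply t.edges_dropUntil_subset hbt
      rw [he]; simp

lemma parents_eq_or_adj (hch : G.IsChordal) (hconn : G.Connected) {x y u v : V}
    (hyu : G.Adj y u) (hyv : G.Adj y v)
    (hyx : G.dist y x = G.dist u x + 1) (hvx : G.dist v x = G.dist u x) :
    u = v ∨ G.Adj u v := by
  by_cases hs0 : G.dist u x = 0
  · left
    have h1 : u = x := hconn.dist_eq_zero_iff.mp hs0
    have h2 : v = x := hconn.dist_eq_zero_iff.mp (by omega)
    rw [h1, h2]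
  by_contra hcon
  push_neg at hcon
  obtain ⟨hne, hnadj⟩ := hcon
  obtain ⟨W0, hW0⟩ := exists_good_walk hconn x hvx.symm
  obtain ⟨R, hRpath, hRQ, hRmin⟩ := exists_min_path _ W0 hW0
  have hR2 : 2 ≤ R.length := by
    rcases Nat.lt_or_ge R.length 2 with h | h
    · have h01 : R.length = 0 ∨ R.length = 1 := by omega
      rcases h01 with h0 | h1
      · exact absurd (Walk.eq_of_length_eq_zero (p := R) h0) hne
      · exact absurd (adj_of_length_one h1) hnadj
    · exact h
  have hyR : y ∉ R.support := by
    intro hyR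
    rcases hRQ y hyR with rfl | rfl | h
    · omega
    · omega
    · omega
  set C : G.Walk y y := Walk.cons hyu (R.concat hyv.symm) with hC
  have hinner_path : (R.concat hyv.symm).IsPath := by
    rw [← Walk.isPath_reverse_iff, Walk.reverse_concat, Walk.cons_isPath_iff]
    refine ⟨(Walk.isPath_reverse_iff R).mpr hRpath, ?_⟩
    rw [Walk.support_reverse, List.mem_reverse]; exact hyR
  have hnotedge : s(y, u) ∉ (R.concat hyv.symm).edges := by
    rw [Walk.edges_concat, List.concat_eq_append, List.mem_append]
    rintro (h | h)
    · exact hyR (R.fst_mem_support_of_mem_edges h)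
    · simp only [List.mem_singleton, Sym2.eq_iff] at h
      rcases h with ⟨h1, h2⟩ | ⟨h1, h2⟩
      · exact hne (h2.trans h1)
      · exact hne h2
  have hcyc : C.IsCycle := (Walk.cons_isCycle_iff _ _).mpr ⟨hinner_path, hnotedge⟩
  have hClen : 4 ≤ C.length := by
    rw [hC, Walk.length_cons, Walk.length_concat]; omega
  obtain ⟨p, q, hpC, hqC, hpq, hnsub⟩ := hch y C hcyc hClen
  have hmemC : ∀ z ∈ C.support, z = y ∨ z ∈ R.support := by
    intro z hz
    rw [hC, Walk.support_cons, List.mem_cons] at hz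
    rcases hz with rfl | hz
    · exact Or.inl rfl
    · rw [Walk.support_concat, List.mem_append] at hz
      rcases hz with hz | hz
      · exact Or.inr hz
      · simp only [List.mem_singleton] at hz; exact Or.inl hz
  have hCsub : ∀ {p q : V}, s(p, q) ∈ C.edges → C.toSubgraph.Adj p q := by
    intro p q h
    exact (SimpleGraph.Subgraph.mem_edgeSet).mp ((C.mem_edges_toSubgraph).mpr h)
  have hCedges : ∀ e ∈ R.edges, e ∈ C.edges := by
    intro e he
    rw [hC, Walk.edges_cons, Walk.edges_concat, List.concat_eq_append]
    simp [he]
  have hedge_yu : s(y, u) ∈ C.edges := by rw [hC, Walk.edges_cons]; simp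
  have hedge_yv : s(y, v) ∈ C.edges := by
    rw [hC, Walk.edges_cons, Walk.edges_concat, List.concat_eq_append, Sym2.eq_swap]
    simp
  have key : ∀ b ∈ R.support, G.Adj y b → ¬ C.toSubgraph.Adj y b → False := by
    intro b hbR hadj hnadj'
    rcases hRQ b hbR with rfl | rfl | h
    · exact hnadj' (hCsub hedge_yu)
    · exact hnadj' (hCsub hedge_yv)
    · have := dist_le_succ_of_adj (x := x) hconn hadj
      omega
  rcases hmemC p hpC with rfl | hpR
  · rcases hmemC q hqC with rfl | hqR
    · exact G.loopless.irrefl _ hpq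
    · exact key q hqR hpq hnsub
  · rcases hmemC q hqC with rfl | hqR
    · exact key p hpR hpq.symm (fun h => hnsub h.symm)
    · exact hnsub (hCsub (hCedges _ (shortcut _ R hRQ hRmin hpR hqR hpq)))

lemma adj_parents_eq_or_adj (hch : G.IsChordal) (hconn : G.Connected) {x a b a₁ b₁ : V}
    (hab : G.Adj a b) (ha₁ : G.Adj a₁ a) (hb₁ : G.Adj b₁ b)
    (hda : G.dist a x = G.dist a₁ x + 1) (hdb : G.dist b x = G.dist a₁ x + 1)
    (hdb₁ : G.dist b₁ x = G.dist a₁ x) :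
    a₁ = b₁ ∨ G.Adj a₁ b₁ := by
  by_cases hk0 : G.dist a₁ x = 0
  · left
    have h1 : a₁ = x := hconn.dist_eq_zero_iff.mp hk0
    have h2 : b₁ = x := hconn.dist_eq_zero_iff.mp (by omega)
    rw [h1, h2]
  by_contra hcon
  push_neg at hcon
  obtain ⟨hne, hnadj⟩ := hcon
  obtain ⟨W0, hW0⟩ := exists_good_walk hconn x hdb₁.symm
  obtain ⟨R, hRpath, hRQ, hRmin⟩ := exists_min_path _ W0 hW0
  have hR2 : 2 ≤ R.length := by
    rcases Nat.lt_or_ge R.length 2 with h | h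
    · have h01 : R.length = 0 ∨ R.length = 1 := by omega
      rcases h01 with h0 | h1
      · exact absurd (Walk.eq_of_length_eq_zero (p := R) h0) hne
      · exact absurd (adj_of_length_one h1) hnadj
    · exact h
  have haR : a ∉ R.support := by
    intro hR
    rcases hRQ a hR with rfl | rfl | h <;> omega
  have hbR : b ∉ R.support := by
    intro hR
    rcases hRQ b hR with rfl | rfl | h <;> omega
  have hna : a₁ ≠ a := fun h => by rw [← h] at hda; omega
  have hnb : a₁ ≠ b := fun h => by rw [← h] at hdb; omega
  set inner : G.Walk a a₁ := Walk.cons hab (Walk.cons hb₁.symm R.reverse) with hinner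
  set C : G.Walk a₁ a₁ := Walk.cons ha₁ inner with hC
  have hinner_path : inner.IsPath := by
    rw [hinner, Walk.cons_isPath_iff, Walk.cons_isPath_iff]
    refine ⟨⟨(Walk.isPath_reverse_iff R).mpr hRpath, ?_⟩, ?_⟩
    · rw [Walk.support_reverse, List.mem_reverse]; exact hbR
    · rw [Walk.support_cons, List.mem_cons]
      rintro (rfl | h)
      · exact G.loopless.irrefl _ hab
      · rw [Walk.support_reverse, List.mem_reverse] at h; exact haR h
  have hnotedge : s(a₁, a) ∉ inner.edges := by
    rw [hinner, Walk.edges_cons, Walk.edges_cons, List.mem_cons, List.mem_cons]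
    rintro (h | h | h)
    · rw [Sym2.eq_iff] at h
      rcases h with ⟨h1, h2⟩ | ⟨h1, h2⟩
      · exact hna h1
      · exact hnb h1
    · rw [Sym2.eq_iff] at h
      rcases h with ⟨h1, h2⟩ | ⟨h1, h2⟩
      · exact hnb h1
      · exact hne h1
    · exact haR (Walk.snd_mem_support_of_mem_edges R (by rwa [Walk.edges_reverse, List.mem_reverse] at h))
  have hcyc : C.IsCycle := (Walk.cons_isCycle_iff _ _).mpr ⟨hinner_path, hnotedge⟩
  have hClen : 4 ≤ C.length := by
    rw [hC, Walk.length_cons, hinner, Walk.length_cons, Walk.length_cons, Walk.length_reverse]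
    omega
  obtain ⟨p, q, hpC, hqC, hpq, hnsub⟩ := hch a₁ C hcyc hClen
  have hmemC : ∀ z ∈ C.support, z = a ∨ z = b ∨ z ∈ R.support := by
    intro z hz
    rw [hC, Walk.support_cons, List.mem_cons] at hz
    rcases hz with rfl | hz
    · exact Or.inr (Or.inr R.start_mem_support)
    · rw [hinner, Walk.support_cons, Walk.support_cons, List.mem_cons, List.mem_cons] at hz
      rcases hz with rfl | rfl | hz
      · exact Or.inl rfl
      · exact Or.inr (Or.inl rfl)
      · rw [Walk.support_reverse, List.mem_reverse] at hz
        exact Or.inr (Or.inr hz)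
  have hCsub : ∀ {p q : V}, s(p, q) ∈ C.edges → C.toSubgraph.Adj p q := by
    intro p q h
    exact (SimpleGraph.Subgraph.mem_edgeSet).mp ((C.mem_edges_toSubgraph).mpr h)
  have hCedges : ∀ e ∈ R.edges, e ∈ C.edges := by
    intro e he
    rw [hC, hinner, Walk.edges_cons, Walk.edges_cons, Walk.edges_cons,
      Walk.edges_reverse]
    simp only [List.mem_cons, List.mem_reverse]
    tauto
  have hedge1 : s(a₁, a) ∈ C.edges := by rw [hC, Walk.edges_cons]; simp
  have hedge_ab : s(a, b) ∈ C.edges := by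
    rw [hC, hinner, Walk.edges_cons, Walk.edges_cons]; simp
  have hedge3 : s(b, b₁) ∈ C.edges := by
    rw [hC, hinner, Walk.edges_cons, Walk.edges_cons, Walk.edges_cons]; simp
  have keya : ∀ q ∈ R.support, G.Adj a q → ¬ C.toSubgraph.Adj a q → False := by
    intro q hq hadj hnadj'
    rcases hRQ q hq with rfl | rfl | h
    · exact hnadj' (hCsub (by rw [Sym2.eq_swap]; exact hedge1))
    · rcases parents_eq_or_adj hch hconn ha₁.symm hadj hda hdb₁ with h' | h'
      · exact hne h'
      · exact hnadj h'
    · have := dist_le_succ_of_adj (x := x) hconn hadj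
      omega
  have keyb : ∀ q ∈ R.support, G.Adj b q → ¬ C.toSubgraph.Adj b q → False := by
    intro q hq hadj hnadj'
    rcases hRQ q hq with rfl | rfl | h
    · rcases parents_eq_or_adj hch hconn hadj hb₁.symm hdb hdb₁ with h' | h'
      · exact hne h'
      · exact hnadj h'
    · exact hnadj' (hCsub hedge3)
    · have := dist_le_succ_of_adj (x := x) hconn hadj
      omega
  rcases hmemC p hpC with rfl | rfl | hpR
  · rcases hmemC q hqC with rfl | rfl | hqR
    · exact G.loopless.irrefl _ hpq
    · exact hnsub (hCsub hedge_ab)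
    · exact keya q hqR hpq hnsub
  · rcases hmemC q hqC with rfl | rfl | hqR
    · exact hnsub (hCsub (by rw [Sym2.eq_swap]; exact hedge_ab))
    · exact G.loopless.irrefl _ hpq
    · exact keyb q hqR hpq hnsub
  · rcases hmemC q hqC with rfl | rfl | hqR
    · exact keya p hpR hpq.symm (fun h => hnsub h.symm)
    · exact keyb p hpR hpq.symm (fun h => hnsub h.symm)
    · exact hnsub (hCsub (hCedges _ (shortcut _ R hRQ hRmin hpR hqR hpq)))

lemma descend (hch : G.IsChordal) (hconn : G.Connected) (x : V) :
    ∀ n : ℕ, ∀ {a b u v : V} (pa : G.Walk a u) (pb : G.Walk b v),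
      G.dist a x = G.dist u x + n → G.dist b x = G.dist u x + n →
      G.dist v x = G.dist u x → (a = b ∨ G.Adj a b) →
      pa.length = n → pb.length = n → u = v ∨ G.Adj u v := by
  intro n
  induction n with
  | zero =>
    intro a b u v pa pb _ _ hdv hab hla hlb
    have h1 : a = u := Walk.eq_of_length_eq_zero (p := pa) hla
    have h2 : b = v := Walk.eq_of_length_eq_zero (p := pb) hlb
    rw [← h1, ← h2]; exact hab
  | succ n ih =>
    intro a b u v pa pb hda hdb hdv hab hla hlb
    cases pa with
    | nil => simp at hla
    | @cons _ a₁ _ h pa' =>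
      cases pb with
      | nil => simp at hlb
      | @cons _ b₁ _ h' pb' =>
        rw [Walk.length_cons] at hla hlb
        have hta : G.dist a₁ x ≤ G.dist u x + n := by
          have t1 : G.dist a₁ x ≤ G.dist a₁ u + G.dist u x := hconn.dist_triangle
          have t2 : G.dist a₁ u ≤ pa'.length := SimpleGraph.dist_le pa'
          omega
        have hsa : G.dist a x ≤ G.dist a₁ x + 1 := dist_le_succ_of_adj hconn h
        have hea : G.dist a₁ x = G.dist u x + n := by omega
        have htb : G.dist b₁ x ≤ G.dist u x + n := by
          have t1 : G.dist b₁ x ≤ G.dist b₁ v + G.dist v x := hconn.dist_triangle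
          have t2 : G.dist b₁ v ≤ pb'.length := SimpleGraph.dist_le pb'
          omega
        have hsb : G.dist b x ≤ G.dist b₁ x + 1 := dist_le_succ_of_adj hconn h'
        have heb : G.dist b₁ x = G.dist u x + n := by omega
        have hstep : a₁ = b₁ ∨ G.Adj a₁ b₁ := by
          rcases hab with rfl | hadj
          · exact parents_eq_or_adj (x := x) hch hconn h h' (by omega) (by omega)
          · exact adj_parents_eq_or_adj (x := x) hch hconn hadj h.symm h'.symm
              (by omega) (by omega) (by omega)
        exact ih pa' pb' hea heb hdv hstep (by omega) (by omega)

end ChordalAux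

/-- In a finite connected chordal graph `G`, if `u` and `v` lie on level
`ℓ ≥ 1` with respect to `x` and are both ancestors of a vertex `y` lying on a level deeper
than `ℓ`, then `u = v` or `u` and `v` are adjacent. -/
theorem ancestors_eq_or_adj {V : Type*} [Fintype V] (G : SimpleGraph V)
    (hch : G.IsChordal) (hconn : G.Connected) (x u v y : V) (ℓ : ℕ) (hℓ : 1 ≤ ℓ)
    (hu : G.dist u x = ℓ) (hv : G.dist v x = ℓ) (hy : ℓ < G.dist y x)
    (hau : G.IsAncestor x u y) (hav : G.IsAncestor x v y) :
    u = v ∨ G.Adj u v := by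
  classical
  obtain ⟨hdu, qu, hqupath, hqulen⟩ := hau
  obtain ⟨hdv, qv, hqvpath, hqvlen⟩ := hav
  have c1 : G.dist x y = G.dist y x := SimpleGraph.dist_comm
  have c2 : G.dist x u = G.dist u x := SimpleGraph.dist_comm
  have c3 : G.dist x v = G.dist v x := SimpleGraph.dist_comm
  exact ChordalAux.descend hch hconn x (G.dist y x - ℓ) qu qv
    (by omega) (by omega) (by omega) (Or.inl rfl) (by omega) (by omega)
end

section
/- Let G be a finite connected chordal graph, let x be a vertex of G, and let u, v be vertices with d_G(u,x) = d_G(v,x) = ℓ for some positive integer ℓ. Suppose d_G(u,v) = p for some even integer p ≥ 2, and let K_u (respectively K_v) be the set of ancestors of u (respectively v) in the level N^{ℓ−p/2}(x). Then either K_u and K_v are adjacent cliques of G, or K_u ∩ K_v ≠ ∅. -/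
open SimpleGraph

section AuxChordal

open Walk

set_option linter.unusedSectionVars false
set_option linter.unusedVariables false

variable {V : Type*} {G : SimpleGraph V}

/-- Splitting a walk at a support vertex bounds the two distances. -/
lemma dist_split_support [DecidableEq V] {u v z : V} (p : G.Walk u v) (hz : z ∈ p.support) :
    G.dist u z + G.dist z v ≤ p.length := by
  have hspec := p.take_spec hz
  have : (p.takeUntil z hz).length + (p.dropUntil z hz).length = p.length := by
    conv_rhs => rw [← hspec]
    rw [Walk.length_append]
  calc G.dist u z + G.dist z v ≤ (p.takeUntil z hz).length + (p.dropUntil z hz).length :=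
        Nat.add_le_add (SimpleGraph.dist_le _) (SimpleGraph.dist_le _)
    _ = p.length := this

/-- Adjacent vertices have distance at most one more. -/
lemma dist_le_adj (hconn : G.Connected) {x y z : V} (h : G.Adj y z) :
    G.dist x z ≤ G.dist x y + 1 := by
  have h1 : G.dist x z ≤ G.dist x y + G.dist y z := hconn.dist_triangle
  have h2 : G.dist y z ≤ 1 := by
    simpa using SimpleGraph.dist_le (Walk.cons h Walk.nil)
  omega

/-- Every vertex at positive distance from `x` has a parent: a neighbour one level lower. -/
lemma exists_parent (hconn : G.Connected) {x a : V} (ha : 1 ≤ G.dist x a) :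
    ∃ c, G.Adj a c ∧ G.dist x c + 1 = G.dist x a := by
  have hax : a ≠ x := by
    rintro rfl
    simp [SimpleGraph.dist_self] at ha
  obtain ⟨W, hW⟩ := hconn.exists_walk_length_eq_dist a x
  obtain ⟨c, hac, W', rfl⟩ := W.exists_eq_cons_of_ne hax
  refine ⟨c, hac, ?_⟩
  have h1 : G.dist c x ≤ W'.length := SimpleGraph.dist_le W'
  have h2 : W'.length + 1 = G.dist a x := by
    simpa [Walk.length_cons] using hW
  have h3 : G.dist x a ≤ G.dist x c + 1 := dist_le_adj hconn hac.symm
  have h4 : G.dist x c = G.dist c x := SimpleGraph.dist_comm ..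
  have h5 : G.dist x a = G.dist a x := SimpleGraph.dist_comm ..
  omega

/-- A geodesic path realizing the distance. -/
lemma exists_geodesic_path [DecidableEq V] (hconn : G.Connected) (u w : V) :
    ∃ q : G.Walk u w, q.IsPath ∧ q.length = G.dist u w := by
  obtain ⟨W, hW⟩ := hconn.exists_walk_length_eq_dist u w
  refine ⟨W.bypass, W.bypass_isPath, le_antisymm ?_ (SimpleGraph.dist_le _)⟩
  calc W.bypass.length ≤ W.length := W.length_bypass_le
    _ = G.dist u w := hW

lemma edge_mem_of_length_one {y z : V} : ∀ (q : G.Walk y z), q.length = 1 → s(y, z) ∈ q.edges := by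
  intro q hq
  cases q with
  | nil => simp at hq
  | cons h q' =>
    have : q'.length = 0 := by simpa using hq
    have := Walk.eq_of_length_eq_zero this
    subst this
    simp

variable [DecidableEq V]


/-- A chord of a walk yields a strictly shorter walk with support inside the old one. -/
lemma shortcut {a b y z : V} (P : G.Walk a b) (hy : y ∈ P.support) (hz : z ∈ P.support)
    (hyz : G.Adj y z) (he : s(y, z) ∉ P.edges) :
    ∃ Q : G.Walk a b, Q.length < P.length ∧ ∀ w ∈ Q.support, w ∈ P.support := by
  have hspec := P.take_spec hy
  set P₁ := P.takeUntil y hy with hP₁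
  set P₂ := P.dropUntil y hy with hP₂
  have hlen : P₁.length + P₂.length = P.length := by
    conv_rhs => rw [← hspec]; rw [Walk.length_append]
  have hzmem : z ∈ P₁.support ∨ z ∈ P₂.support := by
    have := hz
    rw [← hspec, Walk.mem_support_append_iff] at this
    exact this
  rcases hzmem with hz1 | hz2
  · -- z occurs before y : go a → z, jump to y, continue P₂
    have hspec1 := P₁.take_spec hz1
    set A := P₁.takeUntil z hz1 with hA
    set D := P₁.dropUntil z hz1 with hD
    have hlen1 : A.length + D.length = P₁.length := by
      conv_rhs => rw [← hspec1]; rw [Walk.length_append]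
    have hD2 : 2 ≤ D.length := by
      rcases Nat.lt_or_ge D.length 2 with h | h
      · interval_cases hDl : D.length
        · exact absurd (Walk.eq_of_length_eq_zero hDl) hyz.ne'
        · exfalso
          apply he
          have : s(z, y) ∈ D.edges := edge_mem_of_length_one D hDl
          have : s(z, y) ∈ P₁.edges := P₁.edges_dropUntil_subset hz1 this
          have : s(z, y) ∈ P.edges := P.edges_takeUntil_subset hy this
          simpa [Sym2.eq_swap] using this
      · exact h
    refine ⟨A.append (Walk.cons hyz.symm P₂), ?_, ?_⟩
    · rw [Walk.length_append, Walk.length_cons]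
      omega
    · intro w hw
      rw [Walk.mem_support_append_iff] at hw
      rcases hw with hw | hw
      · have : w ∈ P₁.support := P₁.support_takeUntil_subset hz1 hw
        exact P.support_takeUntil_subset hy this
      · rw [Walk.support_cons] at hw
        rcases List.mem_cons.mp hw with hwy | hw
        · rw [hwy]; exact hz
        · exact P.support_dropUntil_subset hy hw
  · -- z occurs after y
    have hspec2 := P₂.take_spec hz2
    set T := P₂.takeUntil z hz2 with hT
    set D := P₂.dropUntil z hz2 with hD
    have hlen2 : T.length + D.length = P₂.length := by
      conv_rhs => rw [← hspec2]; rw [Walk.length_append]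
    have hT2 : 2 ≤ T.length := by
      rcases Nat.lt_or_ge T.length 2 with h | h
      · interval_cases hTl : T.length
        · exact absurd (Walk.eq_of_length_eq_zero hTl) hyz.ne
        · exfalso
          apply he
          have : s(y, z) ∈ T.edges := edge_mem_of_length_one T hTl
          have : s(y, z) ∈ P₂.edges := P₂.edges_takeUntil_subset hz2 this
          exact P.edges_dropUntil_subset hy this
      · exact h
    refine ⟨P₁.append (Walk.cons hyz D), ?_, ?_⟩
    · rw [Walk.length_append, Walk.length_cons]
      omega
    · intro w hw
      rw [Walk.mem_support_append_iff] at hw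
      rcases hw with hw | hw
      · exact P.support_takeUntil_subset hy hw
      · rw [Walk.support_cons] at hw
        rcases List.mem_cons.mp hw with hwy | hw
        · rw [hwy]; exact hy
        · have : w ∈ P₂.support := P₂.support_dropUntil_subset hz2 hw
          exact P.support_dropUntil_subset hy this

/-- Key chordality lemma: two distinct vertices on the same level `r` joined by a walk
all of whose other vertices lie strictly above level `r` must be adjacent. -/
lemma up_adj (hch : G.IsChordal) (hconn : G.Connected) (x : V) :
    ∀ r n (a b : V) (w : G.Walk a b), a ≠ b → G.dist x a = r → G.dist x b = r →
      w.length = n → (∀ z ∈ w.support, z = a ∨ z = b ∨ r < G.dist x z) → G.Adj a b := by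
  intro r
  induction r using Nat.strong_induction_on with
  | _ r ihr =>
  intro n
  induction n using Nat.strong_induction_on with
  | _ n ihn =>
  intro a b w hab hxa hxb hlen hhigh
  have hr1 : 1 ≤ r := by
    rcases Nat.eq_zero_or_pos r with h0 | h; swap
    · exact h
    exfalso
    rw [h0] at hxa hxb
    exact hab (((hconn.dist_eq_zero_iff).mp hxa).symm.trans ((hconn.dist_eq_zero_iff).mp hxb))
  set P := w.bypass with hPdef
  have hPpath : P.IsPath := w.bypass_isPath
  have hPlen : P.length ≤ n := hlen ▸ w.length_bypass_le
  have hPhigh : ∀ z ∈ P.support, z = a ∨ z = b ∨ r < G.dist x z := fun z hz =>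
    hhigh z (w.support_bypass_subset hz)
  by_cases h0 : P.length = 0
  · exact absurd (Walk.eq_of_length_eq_zero h0) hab
  by_cases h1 : P.length = 1
  · exact P.adj_of_length_eq_one h1
  have hP2 : 2 ≤ P.length := by omega
  -- vertices one level below r are not on P
  have hnotmem : ∀ c : V, G.dist x c + 1 = r → c ∉ P.support := by
    intro c hc hmem
    rcases hPhigh c hmem with hca | hcb | hlt
    · rw [hca] at hc; omega
    · rw [hcb] at hc; omega
    · omega
  have hnd : P.support.Nodup := hPpath.support_nodup
  have ha_tail : a ∉ P.support.tail := by
    have h := hnd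
    rw [P.support_eq_cons] at h
    exact (List.nodup_cons.mp h).1
  -- from a chord of P, conclude by the inner induction
  have hinner : ∀ y z : V, y ∈ P.support → z ∈ P.support → G.Adj y z →
      s(y, z) ∉ P.edges → G.Adj a b := by
    intro y z hy hz hyz he
    obtain ⟨Q, hQlen, hQsupp⟩ := shortcut P hy hz hyz he
    exact ihn Q.length (by omega) a b Q hab hxa hxb rfl
      (fun z hz => hPhigh z (hQsupp z hz))
  have hdist_of_adj : ∀ c z : V, G.dist x c + 1 = r → G.Adj c z → ¬ (r < G.dist x z) := by
    intro c z hc hcz hlt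
    have := dist_le_adj hconn (x := x) hcz
    omega
  by_cases hcp : ∃ c, G.Adj a c ∧ G.Adj b c ∧ G.dist x c + 1 = r
  · -- there is a common parent c : use the cycle a --P--> b - c - a
    obtain ⟨c, hac, hbc, hcr⟩ := hcp
    have hcP : c ∉ P.support := hnotmem c hcr
    have hca : c ≠ a := fun h => hcP (h ▸ P.start_mem_support)
    have hcb : c ≠ b := fun h => hcP (h ▸ P.end_mem_support)
    set C : G.Walk a a := P.append (Walk.cons hbc (Walk.cons hac.symm Walk.nil)) with hCdef
    have hCsupp : C.support = P.support ++ [c, a] := by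
      rw [hCdef, Walk.support_append]
      simp
    have hCedges : C.edges = P.edges ++ [s(b, c), s(c, a)] := by
      rw [hCdef, Walk.edges_append]
      simp
    have hClen : C.length = P.length + 2 := by
      rw [hCdef, Walk.length_append]
      simp
    have hCcyc : C.IsCycle := by
      rw [Walk.isCycle_def]
      refine ⟨⟨?_⟩, ?_, ?_⟩
      · rw [hCedges, List.nodup_append']
        refine ⟨hPpath.isTrail.edges_nodup, ?_, ?_⟩
        · simp only [List.nodup_cons, List.mem_singleton, List.not_mem_nil, List.nodup_nil,
            and_true, not_false_iff, List.nodup_nil]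
          intro h
          rcases Sym2.eq_iff.mp h with ⟨h1, h2⟩ | ⟨h1, h2⟩
          · exact hca h2
          · exact hab h1.symm
        · intro e heP he2
          simp only [List.mem_cons, List.not_mem_nil, or_false] at he2
          rcases he2 with rfl | rfl
          · exact hcP (P.snd_mem_support_of_mem_edges heP)
          · exact hcP (P.fst_mem_support_of_mem_edges heP)
      · intro h
        have h2 : C.length = 0 := by rw [h]; rfl
        omega
      · have htail : C.support.tail = P.support.tail ++ [c, a] := by
          rw [hCsupp, List.tail_append_of_ne_nil P.support_ne_nil]
        rw [htail, List.nodup_append']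
        refine ⟨hnd.tail, by simp [hca], ?_⟩
        intro z hzt hz2
        simp only [List.mem_cons, List.not_mem_nil, or_false] at hz2
        have hzsup : z ∈ P.support := List.mem_of_mem_tail hzt
        rcases hz2 with rfl | rfl
        · exact hcP hzsup
        · exact ha_tail hzt
    obtain ⟨y, z, hy, hz, hyz, hns⟩ := hch a C hCcyc (by omega)
    have hnotedge : s(y, z) ∉ C.edges := fun h => hns (SimpleGraph.Subgraph.mem_edgeSet.mp ((C.mem_edges_toSubgraph).mpr h))
    have hbcC : s(b, c) ∈ C.edges := by rw [hCedges]; simp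
    have hcaC : s(c, a) ∈ C.edges := by rw [hCedges]; simp
    have hy' : y ∈ P.support ∨ y = c := by
      rw [hCsupp] at hy
      rcases List.mem_append.mp hy with h | h
      · exact Or.inl h
      · simp only [List.mem_cons, List.not_mem_nil, or_false] at h
        rcases h with rfl | rfl
        · exact Or.inr rfl
        · exact Or.inl P.start_mem_support
    have hz' : z ∈ P.support ∨ z = c := by
      rw [hCsupp] at hz
      rcases List.mem_append.mp hz with h | h
      · exact Or.inl h
      · simp only [List.mem_cons, List.not_mem_nil, or_false] at h
        rcases h with rfl | rfl
        · exact Or.inr rfl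
        · exact Or.inl P.start_mem_support
    rcases hy' with hyP | hyc
    · rcases hz' with hzP | hzc
      · by_cases heP : s(y, z) ∈ P.edges
        · exact absurd (hCedges ▸ List.mem_append_left _ heP) hnotedge
        · exact hinner y z hyP hzP hyz heP
      · rcases hPhigh y hyP with hya | hyb | hlt
        · exact absurd (by rw [hya, hzc, Sym2.eq_swap]; exact hcaC) hnotedge
        · exact absurd (by rw [hyb, hzc]; exact hbcC) hnotedge
        · exfalso
          refine hdist_of_adj c y hcr ?_ hlt
          rw [hzc] at hyz
          exact hyz.symm
    · rcases hz' with hzP | hzc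
      · rcases hPhigh z hzP with hza | hzb | hlt
        · exact absurd (by rw [hyc, hza]; exact hcaC) hnotedge
        · exact absurd (by rw [hyc, hzb, Sym2.eq_swap]; exact hbcC) hnotedge
        · exfalso
          refine hdist_of_adj c z hcr ?_ hlt
          rw [hyc] at hyz
          exact hyz
      · exfalso
        rw [hyc, hzc] at hyz
        exact hyz.ne rfl
  · -- no common parent : take parents a' of a and b' of b; they are adjacent by induction on r
    obtain ⟨a', haa', ha'⟩ := exists_parent hconn (x := x) (a := a) (by omega)
    obtain ⟨b', hbb', hb'⟩ := exists_parent hconn (x := x) (a := b) (by omega)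
    rw [hxa] at ha'
    rw [hxb] at hb'
    have hne' : a' ≠ b' := by
      intro h
      exact hcp ⟨a', haa', h ▸ hbb', ha'⟩
    have hA : G.Adj a' b' := by
      refine ihr (r - 1) (by omega) (P.length + 2) a' b'
        (Walk.cons haa'.symm (P.append (Walk.cons hbb' Walk.nil))) hne' (by omega) (by omega)
        (by simp [Walk.length_append]) ?_
      intro z hz
      rw [Walk.support_cons] at hz
      rcases List.mem_cons.mp hz with hz | hz
      · exact Or.inl hz
      · rw [Walk.support_append] at hz
        rcases List.mem_append.mp hz with hz | hz
        · rcases hPhigh z hz with hza | hzb | hlt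
          · subst hza; right; right; omega
          · subst hzb; right; right; omega
          · right; right; omega
        · simp only [Walk.support_cons, Walk.support_nil, List.tail_cons, List.mem_singleton] at hz
          exact Or.inr (Or.inl hz)
    have ha'P : a' ∉ P.support := hnotmem a' ha'
    have hb'P : b' ∉ P.support := hnotmem b' hb'
    have ha'a : a' ≠ a := fun h => ha'P (h ▸ P.start_mem_support)
    have ha'b : a' ≠ b := fun h => ha'P (h ▸ P.end_mem_support)
    have hb'a : b' ≠ a := fun h => hb'P (h ▸ P.start_mem_support)
    have hb'b : b' ≠ b := fun h => hb'P (h ▸ P.end_mem_support)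
    set C : G.Walk a a :=
      P.append (Walk.cons hbb' (Walk.cons hA.symm (Walk.cons haa'.symm Walk.nil))) with hCdef
    have hCsupp : C.support = P.support ++ [b', a', a] := by
      rw [hCdef, Walk.support_append]
      simp
    have hCedges : C.edges = P.edges ++ [s(b, b'), s(b', a'), s(a', a)] := by
      rw [hCdef, Walk.edges_append]
      simp
    have hClen : C.length = P.length + 3 := by
      rw [hCdef, Walk.length_append]
      simp
    have hCcyc : C.IsCycle := by
      rw [Walk.isCycle_def]
      refine ⟨⟨?_⟩, ?_, ?_⟩
      · rw [hCedges, List.nodup_append']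
        refine ⟨hPpath.isTrail.edges_nodup, ?_, ?_⟩
        · simp only [List.nodup_cons, List.mem_cons, List.not_mem_nil, or_false,
            List.nodup_nil, and_true, List.mem_singleton]
          refine ⟨?_, ?_, by simp⟩
          · intro h
            rcases h with h | h
            · rcases Sym2.eq_iff.mp h with ⟨h1, h2⟩ | ⟨h1, h2⟩
              · exact hb'b h1.symm
              · exact ha'b h1.symm
            · rcases Sym2.eq_iff.mp h with ⟨h1, h2⟩ | ⟨h1, h2⟩
              · exact ha'b h1.symm
              · exact hab h1.symm
          · intro h
            rcases Sym2.eq_iff.mp h with ⟨h1, h2⟩ | ⟨h1, h2⟩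
            · exact hne' h1.symm
            · exact hb'a h1
        · intro e heP he2
          simp only [List.mem_cons, List.not_mem_nil, or_false] at he2
          rcases he2 with rfl | rfl | rfl
          · exact hb'P (P.snd_mem_support_of_mem_edges heP)
          · exact hb'P (P.fst_mem_support_of_mem_edges heP)
          · exact ha'P (P.fst_mem_support_of_mem_edges heP)
      · intro h
        have h2 : C.length = 0 := by rw [h]; rfl
        omega
      · have htail : C.support.tail = P.support.tail ++ [b', a', a] := by
          rw [hCsupp, List.tail_append_of_ne_nil P.support_ne_nil]
        rw [htail, List.nodup_append']
        refine ⟨hnd.tail, by simp [Ne.symm hne', hb'a, ha'a], ?_⟩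
        intro z hzt hz2
        simp only [List.mem_cons, List.not_mem_nil, or_false] at hz2
        have hzsup : z ∈ P.support := List.mem_of_mem_tail hzt
        rcases hz2 with rfl | rfl | rfl
        · exact hb'P hzsup
        · exact ha'P hzsup
        · exact ha_tail hzt
    obtain ⟨y, z, hy, hz, hyz, hns⟩ := hch a C hCcyc (by omega)
    have hnotedge : s(y, z) ∉ C.edges := fun h => hns (SimpleGraph.Subgraph.mem_edgeSet.mp ((C.mem_edges_toSubgraph).mpr h))
    have hbb'C : s(b, b') ∈ C.edges := by rw [hCedges]; simp
    have hb'a'C : s(b', a') ∈ C.edges := by rw [hCedges]; simp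
    have ha'aC : s(a', a) ∈ C.edges := by rw [hCedges]; simp
    have hdecode : ∀ t : V, t ∈ C.support → t ∈ P.support ∨ t = b' ∨ t = a' := by
      intro t ht
      rw [hCsupp] at ht
      rcases List.mem_append.mp ht with h | h
      · exact Or.inl h
      · simp only [List.mem_cons, List.not_mem_nil, or_false] at h
        rcases h with rfl | rfl | rfl
        · exact Or.inr (Or.inl rfl)
        · exact Or.inr (Or.inr rfl)
        · exact Or.inl P.start_mem_support
    have hmix : ∀ c t : V, (c = a' ∨ c = b') → G.Adj c t → s(c, t) ∉ C.edges →
        t ∈ P.support → G.Adj a b := by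
      intro c t hc hct hne htP
      exfalso
      rcases hPhigh t htP with hta | htb | hlt
      · rcases hc with h | h
        · apply hne
          rw [h, hta]
          exact ha'aC
        · refine hcp ⟨c, ?_, ?_, ?_⟩
          · rw [hta] at hct; exact hct.symm
          · rw [h]; exact hbb'
          · rw [h]; exact hb'
      · rcases hc with h | h
        · refine hcp ⟨c, ?_, ?_, ?_⟩
          · rw [h]; exact haa'
          · rw [htb] at hct; exact hct.symm
          · rw [h]; exact ha'
        · apply hne
          rw [h, htb, Sym2.eq_swap]
          exact hbb'C
      · refine hdist_of_adj c t ?_ hct hlt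
        rcases hc with h | h
        · rw [h]; exact ha'
        · rw [h]; exact hb'
    rcases hdecode y hy with hyP | hyp'
    · rcases hdecode z hz with hzP | hzp'
      · by_cases heP : s(y, z) ∈ P.edges
        · exact absurd (hCedges ▸ List.mem_append_left _ heP) hnotedge
        · exact hinner y z hyP hzP hyz heP
      · exact hmix z y (hzp'.symm) hyz.symm
          (fun h => hnotedge (by rwa [Sym2.eq_swap] at h)) hyP
    · rcases hdecode z hz with hzP | hzp'
      · exact hmix y z (hyp'.symm) hyz hnotedge hzP
      · exfalso
        rcases hyp' with h1 | h1 <;> rcases hzp' with h2 | h2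
        · rw [h1, h2] at hyz; exact hyz.ne rfl
        · apply hnotedge; rw [h1, h2]; exact hb'a'C
        · apply hnotedge; rw [h1, h2, Sym2.eq_swap]; exact hb'a'C
        · rw [h1, h2] at hyz; exact hyz.ne rfl

lemma ancestor_mem (hconn : G.Connected) {x u w : V} {ℓ k : ℕ}
    (hxu : G.dist x u = ℓ) (hk1 : 1 ≤ k) (hkl : k ≤ ℓ)
    (hw : G.dist x w = ℓ - k) (hd : G.dist u w = k) :
    G.dist x w = ℓ - k ∧ G.IsAncestor x w u := by
  refine ⟨hw, ?_, ?_⟩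
  · rw [hw, hxu]; omega
  · obtain ⟨q, hq, hqlen⟩ := exists_geodesic_path hconn u w
    exact ⟨q, hq, by rw [hqlen, hd, hxu, hw]; omega⟩

lemma exists_ancestor_at (hconn : G.Connected) (x u : V) :
    ∀ i, i ≤ G.dist x u → ∃ m, G.dist u m = i ∧ G.dist x m + i = G.dist x u := by
  intro i
  induction i with
  | zero => exact fun _ => ⟨u, by simp [SimpleGraph.dist_self], by simp⟩
  | succ i ih =>
    intro hi
    obtain ⟨m, hum, hxm⟩ := ih (by omega)
    have hm1 : 1 ≤ G.dist x m := by omega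
    obtain ⟨c, hmc, hc⟩ := exists_parent hconn hm1
    refine ⟨c, ?_, by omega⟩
    have h1 : G.dist x c ≤ G.dist x m := by omega
    have h4 : G.dist u c ≤ G.dist u m + 1 := by
      have := dist_le_adj hconn (x := u) hmc
      omega
    have h2 : G.dist x u ≤ G.dist x c + G.dist c u := hconn.dist_triangle
    have h3 : G.dist c u = G.dist u c := SimpleGraph.dist_comm ..
    omega

theorem ancestor_cliques_adjacent_or_meet_of_even' (G : SimpleGraph V)
    (hch : G.IsChordal) (hconn : G.Connected) (x u v : V) (ℓ p : ℕ) (hℓ : 1 ≤ ℓ)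
    (hu : G.dist u x = ℓ) (hv : G.dist v x = ℓ)
    (heven : Even p) (hp : 2 ≤ p) (huv : G.dist u v = p)
    (Ku Kv : Set V)
    (hKu : Ku = {w : V | G.dist x w = ℓ - p / 2 ∧ G.IsAncestor x w u})
    (hKv : Kv = {w : V | G.dist x w = ℓ - p / 2 ∧ G.IsAncestor x w v}) :
    (Disjoint Ku Kv ∧ ∃ a ∈ Ku, ∃ b ∈ Kv, G.Adj a b) ∨ (Ku ∩ Kv).Nonempty := by
  set k := p / 2 with hkdef
  obtain ⟨t, ht⟩ := heven
  have hpk : p = 2 * k := by omega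
  have hk1 : 1 ≤ k := by omega
  have hxu : G.dist x u = ℓ := by rw [SimpleGraph.dist_comm]; exact hu
  have hxv : G.dist x v = ℓ := by rw [SimpleGraph.dist_comm]; exact hv
  have hkl : k ≤ ℓ := by
    have h2 : G.dist u v ≤ G.dist u x + G.dist x v := hconn.dist_triangle
    rw [huv, hu, hxv] at h2
    omega
  by_cases hne : (Ku ∩ Kv).Nonempty
  · exact Or.inr hne
  left
  refine ⟨Set.disjoint_iff_inter_eq_empty.mpr (Set.not_nonempty_iff_eq_empty.mp hne), ?_⟩
  obtain ⟨a, hua, hxa⟩ := exists_ancestor_at hconn x u k (by omega)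
  obtain ⟨b, hvb, hxb⟩ := exists_ancestor_at hconn x v k (by omega)
  have hxa' : G.dist x a = ℓ - k := by omega
  have hxb' : G.dist x b = ℓ - k := by omega
  have haKu : a ∈ Ku := by
    rw [hKu]
    exact ancestor_mem hconn hxu hk1 hkl hxa' hua
  have hbKv : b ∈ Kv := by
    rw [hKv]
    exact ancestor_mem hconn hxv hk1 hkl hxb' hvb
  have hab : a ≠ b := fun h => hne ⟨a, haKu, h ▸ hbKv⟩
  obtain ⟨Pa, hPa⟩ := hconn.exists_walk_length_eq_dist u a
  obtain ⟨W, hW⟩ := hconn.exists_walk_length_eq_dist u v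
  obtain ⟨Pb, hPb⟩ := hconn.exists_walk_length_eq_dist v b
  refine ⟨a, haKu, b, hbKv, ?_⟩
  set Wab : G.Walk a b := Pa.reverse.append (W.append Pb) with hWab
  refine up_adj hch hconn x (ℓ - k) Wab.length a b Wab hab hxa' hxb' rfl ?_
  intro z hz
  rw [hWab, Walk.mem_support_append_iff] at hz
  rcases hz with hz | hz
  · -- z on the geodesic from u to a
    rw [Walk.support_reverse, List.mem_reverse] at hz
    by_cases hza : z = a
    · exact Or.inl hza
    right; right
    have hsplit : G.dist u z + G.dist z a ≤ Pa.length := dist_split_support Pa hz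
    rw [hPa, hua] at hsplit
    have hpos : 0 < G.dist z a := hconn.pos_dist_of_ne hza
    have htri : G.dist x u ≤ G.dist x z + G.dist z u := hconn.dist_triangle
    have hcm : G.dist z u = G.dist u z := SimpleGraph.dist_comm ..
    omega
  rw [Walk.mem_support_append_iff] at hz
  rcases hz with hz | hz
  · -- z on the geodesic from u to v
    by_cases hgt : ℓ - k < G.dist x z
    · exact Or.inr (Or.inr hgt)
    exfalso
    have hsplit : G.dist u z + G.dist z v ≤ W.length := dist_split_support W hz
    rw [hW, huv] at hsplit
    have htri1 : G.dist x u ≤ G.dist x z + G.dist z u := hconn.dist_triangle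
    have htri2 : G.dist x v ≤ G.dist x z + G.dist z v := hconn.dist_triangle
    have hcm1 : G.dist z u = G.dist u z := SimpleGraph.dist_comm ..
    have hduz : G.dist u z = k := by omega
    have hdzv : G.dist z v = k := by omega
    have hdxz : G.dist x z = ℓ - k := by omega
    apply hne
    refine ⟨z, ?_, ?_⟩
    · rw [hKu]
      exact ancestor_mem hconn hxu hk1 hkl hdxz hduz
    · rw [hKv]
      refine ancestor_mem hconn hxv hk1 hkl hdxz ?_
      rw [SimpleGraph.dist_comm]
      exact hdzv
  · -- z on the geodesic from v to b
    by_cases hzb : z = b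
    · exact Or.inr (Or.inl hzb)
    right; right
    have hsplit : G.dist v z + G.dist z b ≤ Pb.length := dist_split_support Pb hz
    rw [hPb, hvb] at hsplit
    have hpos : 0 < G.dist z b := hconn.pos_dist_of_ne hzb
    have htri : G.dist x v ≤ G.dist x z + G.dist z v := hconn.dist_triangle
    have hcm : G.dist z v = G.dist v z := SimpleGraph.dist_comm ..
    omega

end AuxChordal

/-- In a finite connected chordal graph `G`, let `u, v` lie on level
`ℓ ≥ 1` with respect to `x` with `d_G(u,v) = p` for an even `p ≥ 2`, and let `K_u, K_v` be
the sets of ancestors of `u, v` on level `ℓ - p/2`. Then either `K_u` and `K_v` are adjacent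
cliques (disjoint, with some vertex of `K_u` adjacent to some vertex of `K_v`), or
`K_u ∩ K_v ≠ ∅`. -/
theorem ancestor_cliques_adjacent_or_meet_of_even {V : Type*} [Fintype V] (G : SimpleGraph V)
    (hch : G.IsChordal) (hconn : G.Connected) (x u v : V) (ℓ p : ℕ) (hℓ : 1 ≤ ℓ)
    (hu : G.dist u x = ℓ) (hv : G.dist v x = ℓ)
    (heven : Even p) (hp : 2 ≤ p) (huv : G.dist u v = p)
    (Ku Kv : Set V)
    (hKu : Ku = {w : V | G.dist x w = ℓ - p / 2 ∧ G.IsAncestor x w u})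
    (hKv : Kv = {w : V | G.dist x w = ℓ - p / 2 ∧ G.IsAncestor x w v}) :
    (Disjoint Ku Kv ∧ ∃ a ∈ Ku, ∃ b ∈ Kv, G.Adj a b) ∨ (Ku ∩ Kv).Nonempty := by
  letI : DecidableEq V := Classical.decEq V
  exact ancestor_cliques_adjacent_or_meet_of_even' G hch hconn x u v ℓ p hℓ hu hv heven hp huv
    Ku Kv hKu hKv
end

section
/- Let G be a finite graph with a perfect elimination ordering L, and let K and K* be cliques of G with K ∩ K* ≠ ∅. If the L-minimum vertex of K is distinct from the L-minimum vertex of K*, then these two minimum vertices are adjacent in G. -/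
open SimpleGraph

/-- A linear order on the vertices is a *perfect elimination ordering* of `G` if for every
vertex `v`, the neighbours of `v` that are smaller than `v` form a clique. -/
def SimpleGraph.IsPerfectElimOrdering {V : Type*} [LinearOrder V] (G : SimpleGraph V) : Prop :=
  ∀ v : V, G.IsClique {u : V | G.Adj u v ∧ u < v}

private lemma aux_min_adj {V : Type*} [Fintype V] [LinearOrder V]
    (G : SimpleGraph V) (hpeo : G.IsPerfectElimOrdering)
    (K K' : Finset V) (hK : G.IsClique (K : Set V)) (hK' : G.IsClique (K' : Set V))
    (hKne : K.Nonempty) (hK'ne : K'.Nonempty) (hmeet : (K ∩ K').Nonempty)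
    (hlt : K.min' hKne < K'.min' hK'ne) :
    G.Adj (K.min' hKne) (K'.min' hK'ne) := by
  obtain ⟨w, hw⟩ := hmeet
  rw [Finset.mem_inter] at hw
  set a := K.min' hKne with ha
  set b := K'.min' hK'ne with hb
  have haK : a ∈ K := K.min'_mem hKne
  have hbK' : b ∈ K' := K'.min'_mem hK'ne
  have hbw : b ≤ w := K'.min'_le w hw.2
  rcases eq_or_lt_of_le hbw with h | h
  · subst h
    exact hK haK hw.1 hlt.ne
  · have haw : a < w := lt_trans hlt h
    have hadjaw : G.Adj a w := hK haK hw.1 haw.ne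
    have hadjbw : G.Adj b w := hK' hbK' hw.2 h.ne
    exact hpeo w ⟨hadjaw, haw⟩ ⟨hadjbw, h⟩ hlt.ne

/-- Let `G` be a finite graph with a perfect elimination ordering, and let
`K, K'` be cliques of `G` with `K ∩ K' ≠ ∅`. If the minimum vertices of `K` and `K'` are
distinct, then they are adjacent in `G`. -/
theorem min_of_intersecting_cliques_adj {V : Type*} [Fintype V] [LinearOrder V]
    (G : SimpleGraph V) (hpeo : G.IsPerfectElimOrdering)
    (K K' : Finset V) (hK : G.IsClique (K : Set V)) (hK' : G.IsClique (K' : Set V))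
    (hKne : K.Nonempty) (hK'ne : K'.Nonempty) (hmeet : (K ∩ K').Nonempty)
    (hmin : K.min' hKne ≠ K'.min' hK'ne) :
    G.Adj (K.min' hKne) (K'.min' hK'ne) := by
  rcases lt_or_gt_of_ne hmin with h | h
  · exact aux_min_adj G hpeo K K' hK hK' hKne hK'ne hmeet h
  · exact (aux_min_adj G hpeo K' K hK' hK hK'ne hKne (by rwa [Finset.inter_comm]) h).symm
end

section
/- Let G be a finite graph with clique number at most t that has a perfect elimination ordering L. Then there exists a colouring a of the vertices of G using at most ((t+1) choose 2) colours such that for every vertex v, a(v) differs from a(u) whenever u is a predecessor of v or u is a predecessor of a predecessor of v (with respect to L). -/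
open SimpleGraph

/-- `u` is a *predecessor* of `v` if `u` and `v` are adjacent and `u` is smaller than `v`. -/
def SimpleGraph.IsPredecessor {V : Type*} [LinearOrder V] (G : SimpleGraph V) (u v : V) : Prop :=
  G.Adj u v ∧ u < v

open Finset

section Aux

/-- least natural number not in `s` -/
noncomputable def mexAux (s : Finset ℕ) : ℕ := sInf {n : ℕ | n ∉ s}

lemma mexAux_not_mem (s : Finset ℕ) : mexAux s ∉ s := by
  have hne : {n : ℕ | n ∉ s}.Nonempty := by
    refine ⟨s.sup id + 1, fun h => ?_⟩
    have h2 : s.sup id + 1 ≤ s.sup id := Finset.le_sup (f := id) (b := s.sup id + 1) h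
    omega
  exact Nat.sInf_mem hne

lemma mexAux_le_card (s : Finset ℕ) : mexAux s ≤ s.card := by
  by_contra h
  push_neg at h
  have hsub : Finset.range (s.card + 1) ⊆ s := by
    intro n hn
    rw [Finset.mem_range] at hn
    have : n < mexAux s := lt_of_lt_of_le hn h
    have := Nat.notMem_of_lt_sInf this
    simpa using this
  have := Finset.card_le_card hsub
  simp at this

lemma rank_sum {V : Type*} [LinearOrder V] (s : Finset V) :
    ∑ w ∈ s, (s.filter (· < w)).card = s.card.choose 2 := by
  induction s using Finset.induction_on_max with
  | empty => simp
  | insert a s ha ih =>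
    have hna : a ∉ s := fun h => lt_irrefl a (ha a h)
    rw [Finset.sum_insert hna, Finset.card_insert_of_notMem hna]
    have h1 : (insert a s).filter (· < a) = s := by
      ext x
      simp only [mem_filter, mem_insert]
      constructor
      · rintro ⟨h | h, hx⟩
        · exact absurd hx (by simp [h])
        · exact h
      · exact fun h => ⟨Or.inr h, ha x h⟩
    have h2 : ∀ w ∈ s, (insert a s).filter (· < w) = s.filter (· < w) := by
      intro w hw
      ext x
      simp only [mem_filter, mem_insert]
      constructor
      · rintro ⟨h | h, hx⟩
        · exact absurd hx (by simp [not_lt.2 (ha w hw).le, h])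
        · exact ⟨h, hx⟩
      · exact fun ⟨h, hx⟩ => ⟨Or.inr h, hx⟩
    rw [h1, Finset.sum_congr rfl fun w hw => by rw [h2 w hw]]
    rw [ih, Nat.choose]
    simp [Nat.choose_one_right, Nat.add_comm]

variable {V : Type*} [Fintype V] [LinearOrder V] (G : SimpleGraph V)

open Classical in
/-- the predecessors of `v` as a Finset -/
noncomputable def predsAux (v : V) : Finset V :=
  Finset.univ.filter (fun u => G.Adj u v ∧ u < v)

lemma mem_predsAux {v u : V} : u ∈ predsAux G v ↔ G.Adj u v ∧ u < v := by
  classical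
  simp [predsAux]

/-- forbidden set for `v`: predecessors and predecessors of predecessors -/
noncomputable def forbAux (v : V) : Finset V :=
  predsAux G v ∪ (predsAux G v).biUnion (predsAux G)

lemma forbAux_lt {v u : V} (h : u ∈ forbAux G v) : u < v := by
  rcases Finset.mem_union.1 h with h | h
  · exact (mem_predsAux G |>.1 h).2
  · rcases Finset.mem_biUnion.1 h with ⟨w, hw, hu⟩
    exact lt_trans (mem_predsAux G |>.1 hu).2 (mem_predsAux G |>.1 hw).2

noncomputable def greedyAux : V → ℕ :=
  have wf : WellFoundedLT V := Finite.to_wellFoundedLT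
  WellFounded.fix wf.wf
    (fun v ih => mexAux ((forbAux G v).attach.image (fun u => ih u.1 (forbAux_lt G u.2))))

lemma greedyAux_eq (v : V) :
    greedyAux G v = mexAux ((forbAux G v).image (greedyAux G)) := by
  rw [greedyAux]
  rw [WellFounded.fix_eq]
  congr 1
  ext n
  simp only [Finset.mem_image, Finset.mem_attach, true_and, Subtype.exists]
  constructor
  · rintro ⟨u, hu, rfl⟩; exact ⟨u, hu, rfl⟩
  · rintro ⟨u, hu, rfl⟩; exact ⟨u, hu, rfl⟩

lemma greedyAux_not_mem (v : V) (u : V) (hu : u ∈ forbAux G v) :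
    greedyAux G u ≠ greedyAux G v := by
  intro h
  have h1 := mexAux_not_mem ((forbAux G v).image (greedyAux G))
  rw [← greedyAux_eq] at h1
  exact h1 (h ▸ Finset.mem_image_of_mem _ hu)

lemma greedyAux_le (v : V) : greedyAux G v ≤ (forbAux G v).card := by
  rw [greedyAux_eq]
  exact le_trans (mexAux_le_card _) (Finset.card_image_le)

end Aux

section Main
variable {V : Type*} [Fintype V] [LinearOrder V] (G : SimpleGraph V)

lemma two_mul_choose_two_aux (n : ℕ) : 2 * n.choose 2 + n = n * n := by
  have hc2 : 2 * n.choose 2 = n * (n - 1) := by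
    rw [Nat.choose_two_right]
    refine Nat.mul_div_cancel' ?_
    rcases Nat.even_or_odd n with h | h
    · exact (h.mul_right _).two_dvd
    · exact ((Nat.Odd.sub_odd h odd_one).mul_left _).two_dvd
  cases n with
  | zero => simp
  | succ m =>
    rw [hc2]
    simp only [Nat.succ_sub_one]
    ring

lemma clique_card_le_aux {t : ℕ} {s : Finset V} (hs : G.IsClique ↑s)
    (hcf : G.CliqueFree (t+1)) : s.card ≤ t := by
  by_contra h
  push_neg at h
  obtain ⟨u, hsub, hcard⟩ := Finset.exists_subset_card_eq h
  exact hcf u ⟨hs.subset (by exact_mod_cast hsub), hcard⟩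

lemma predsAux_clique (hpeo : G.IsPerfectElimOrdering) (v : V) :
    G.IsClique ↑(predsAux G v) := by
  have : (↑(predsAux G v) : Set V) = {u : V | G.Adj u v ∧ u < v} := by
    ext u; simp [mem_predsAux]
  rw [this]
  exact hpeo v

lemma insert_predsAux_clique (hpeo : G.IsPerfectElimOrdering) (v : V) :
    G.IsClique ↑(insert v (predsAux G v)) := by
  rw [Finset.coe_insert]
  refine (predsAux_clique G hpeo v).insert (fun b hb _ => ?_)
  exact ((mem_predsAux G).1 hb).1.symm

lemma card_predsAux_lt {t : ℕ} (hcf : G.CliqueFree (t+1))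
    (hpeo : G.IsPerfectElimOrdering) (v : V) : (predsAux G v).card + 1 ≤ t := by
  have hv : v ∉ predsAux G v := fun h => lt_irrefl v ((mem_predsAux G).1 h).2
  have := clique_card_le_aux G (insert_predsAux_clique G hpeo v) hcf
  rwa [Finset.card_insert_of_notMem hv] at this

lemma card_forbAux_lt {t : ℕ} (hcf : G.CliqueFree (t+1))
    (hpeo : G.IsPerfectElimOrdering) (v : V) :
    (forbAux G v).card < (t + 1).choose 2 := by
  classical
  set P := predsAux G v with hP
  set k := P.card with hk
  -- per-w bound
  have hper : ∀ w ∈ P, (predsAux G w \ P).card + (P.filter (· < w)).card + 1 ≤ t := by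
    intro w hw
    have hfsub : P.filter (· < w) ⊆ predsAux G w ∩ P := by
      intro x hx
      rw [Finset.mem_filter] at hx
      obtain ⟨hxP, hxw⟩ := hx
      refine Finset.mem_inter.2 ⟨(mem_predsAux G).2 ⟨?_, hxw⟩, hxP⟩
      exact predsAux_clique G hpeo v hxP hw (ne_of_lt hxw)
    have h1 : (predsAux G w \ P).card + (predsAux G w ∩ P).card = (predsAux G w).card :=
      Finset.card_sdiff_add_card_inter _ _
    have h2 : (P.filter (· < w)).card ≤ (predsAux G w ∩ P).card :=
      Finset.card_le_card hfsub
    have h3 := card_predsAux_lt G hcf hpeo w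
    omega
  -- forb is contained in P ∪ ⋃ (preds w \ P)
  have hsub : forbAux G v ⊆ P ∪ P.biUnion (fun w => predsAux G w \ P) := by
    intro u hu
    rcases Finset.mem_union.1 hu with h | h
    · exact Finset.mem_union_left _ h
    · rcases Finset.mem_biUnion.1 h with ⟨w, hw, hu'⟩
      by_cases hup : u ∈ P
      · exact Finset.mem_union_left _ hup
      · exact Finset.mem_union_right _
          (Finset.mem_biUnion.2 ⟨w, hw, Finset.mem_sdiff.2 ⟨hu', hup⟩⟩)
  have hA : (forbAux G v).card ≤ k + ∑ w ∈ P, (predsAux G w \ P).card := by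
    calc (forbAux G v).card ≤ (P ∪ P.biUnion (fun w => predsAux G w \ P)).card :=
          Finset.card_le_card hsub
      _ ≤ P.card + (P.biUnion (fun w => predsAux G w \ P)).card := Finset.card_union_le _ _
      _ ≤ k + ∑ w ∈ P, (predsAux G w \ P).card := by
          exact Nat.add_le_add_left (Finset.card_biUnion_le) k
  have hB : (∑ w ∈ P, (predsAux G w \ P).card) + k.choose 2 + k ≤ k * t := by
    have := Finset.sum_le_sum hper
    rw [Finset.sum_add_distrib, Finset.sum_add_distrib, rank_sum, Finset.sum_const,
      Finset.sum_const, smul_eq_mul, smul_eq_mul, mul_one] at this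
    rw [← hk] at this
    omega
  have hC : k + 1 ≤ t := card_predsAux_lt G hcf hpeo v
  -- arithmetic
  have hc2' : 2 * k.choose 2 + k = k * k := two_mul_choose_two_aux k
  have hch : 2 * (t + 1).choose 2 = t * (t + 1) := by
    have hev : 2 ∣ (t + 1) * t := by
      rw [Nat.mul_comm]
      exact (Nat.even_mul_succ_self t).two_dvd
    rw [Nat.choose_two_right, Nat.add_sub_cancel, Nat.mul_div_cancel' hev, Nat.mul_comm]
  have key : 2 * (forbAux G v).card + 2 ≤ t * (t + 1) := by
    zify at hA hB hC hc2' ⊢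
    nlinarith [mul_nonneg (show (0:ℤ) ≤ t - k - 1 by omega) (show (0:ℤ) ≤ t - k + 2 by omega)]
  omega

end Main


/-- Let `G` be a finite graph with clique number at most `t` admitting a
perfect elimination ordering. Then the vertices of `G` can be coloured with at most
`(t+1) choose 2` colours so that every vertex gets a colour different from those of its
predecessors and of the predecessors of its predecessors. -/
theorem colouring_of_perfectElimOrdering {V : Type*} [Fintype V] [LinearOrder V]
    (G : SimpleGraph V) (t : ℕ) (hcf : G.CliqueFree (t + 1))
    (hpeo : G.IsPerfectElimOrdering) :
    ∃ a : V → ℕ, (∀ v, a v < (t + 1).choose 2) ∧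
      (∀ u v, G.IsPredecessor u v → a u ≠ a v) ∧
      (∀ u w v, G.IsPredecessor u w → G.IsPredecessor w v → a u ≠ a v) := by
  refine ⟨greedyAux G, fun v => ?_, fun u v huv => ?_, fun u w v huw hwv => ?_⟩
  · exact lt_of_le_of_lt (greedyAux_le G v) (card_forbAux_lt G hcf hpeo v)
  · refine greedyAux_not_mem G v u ?_
    exact Finset.mem_union_left _ ((mem_predsAux G).2 huv)
  · refine greedyAux_not_mem G v u ?_
    exact Finset.mem_union_right _
      (Finset.mem_biUnion.2 ⟨w, (mem_predsAux G).2 hwv, (mem_predsAux G).2 huw⟩)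
end
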